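/- arXiv:math/9810182 — 4 statements merged into one kernel-verified Lean document; each statement's English description precedes it below -/
import Mathlib

section
/- Let F be a finite field with q elements and let χ be a nontrivial multiplicative character of F^× , extended to F by χ(0) = 0. Then Σ_{u₁, v₁, u₂, v₂ ∈ F, u₁ v₁ = u₂ v₂} χ( u₁ v₁ (u₁ + 1)(v₁ + 1) ) · conj( χ( u₂ v₂ (u₂ + 1)(v₂ + 1) ) ) = q² − 2q − 2. -/
set_option linter.unusedSectionVars false
set_option maxHeartbeats 1000000

open Finset

section Helpers
variable {F : Type*} [Field F] [Fintype F] [DecidableEq F]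

lemma lemD (χ : MulChar F ℂ) (c u : F) :
    ∑ t : F, χ (c * (t + u) * (t + u)⁻¹) = ((Fintype.card F : ℂ) - 1) * χ c := by
  set f : F → ℂ := fun t => χ (c * (t + u) * (t + u)⁻¹) with hf
  rw [← Finset.add_sum_erase univ f (mem_univ (-u))]
  have hfb : f (-u) = 0 := by simp [hf, χ.map_zero]
  have hsame : ∀ t ∈ univ.erase (-u), f t = χ c := by
    intro t ht
    have htb : t + u ≠ 0 := by
      intro h
      exact (Finset.mem_erase.mp ht).1 (by linear_combination h)
    simp only [hf]
    rw [mul_assoc, mul_inv_cancel₀ htb, mul_one]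
  rw [Finset.sum_congr rfl hsame, hfb, zero_add, Finset.sum_const,
    Finset.card_erase_of_mem (mem_univ _), Finset.card_univ, nsmul_eq_mul]
  congr 1
  have : 1 ≤ Fintype.card F := Fintype.card_pos
  push_cast [Nat.cast_sub this]
  ring

lemma chi_sum (χ : MulChar F ℂ) (hχ : χ ≠ 1) : ∑ x : F, χ x = 0 :=
  MulChar.sum_eq_zero_of_ne_one hχ

lemma chi_sum_affine (χ : MulChar F ℂ) (hχ : χ ≠ 1) (c d : F) (hd : d ≠ 0) :
    ∑ t : F, χ (c + d * t) = 0 := by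
  rw [← chi_sum χ hχ]
  exact Fintype.sum_equiv ((Equiv.mulLeft₀ d hd).trans (Equiv.addLeft c)) _ _ (fun x => rfl)

lemma lemM (χ : MulChar F ℂ) (hχ : χ ≠ 1) (c a b : F) (hab : a ≠ b) :
    ∑ t : F, χ (c * (t + a) * (t + b)⁻¹) = -χ c := by
  set f : F → ℂ := fun t => χ (c * (t + a) * (t + b)⁻¹) with hf
  set g : F → ℂ := fun t => χ (c + c * (a - b) * (t + b)⁻¹) with hg
  have e1 : ∑ t : F, f t = f (-b) + ∑ t ∈ univ.erase (-b), f t :=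
    (Finset.add_sum_erase univ f (mem_univ (-b))).symm
  have e2 : ∑ t : F, g t = g (-b) + ∑ t ∈ univ.erase (-b), g t :=
    (Finset.add_sum_erase univ g (mem_univ (-b))).symm
  have hfb : f (-b) = 0 := by simp [hf, χ.map_zero]
  have hgb : g (-b) = χ c := by simp [hg]
  have hsame : ∑ t ∈ univ.erase (-b), f t = ∑ t ∈ univ.erase (-b), g t := by
    refine Finset.sum_congr rfl (fun t ht => ?_)
    have htb : t + b ≠ 0 := by
      intro h
      exact (Finset.mem_erase.mp ht).1 (by linear_combination h)
    simp only [hf, hg]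
    congr 1
    field_simp
    ring
  have step2 : ∑ t : F, g t = 0 := by
    rcases eq_or_ne c 0 with hc | hc
    · simp [hg, hc, χ.map_zero]
    · have : ∑ t : F, g t = ∑ t : F, χ (c + c * (a - b) * t) :=
        Fintype.sum_equiv ((Equiv.addRight b).trans (Equiv.inv F)) _ _ (fun x => rfl)
      rw [this]
      exact chi_sum_affine χ hχ c _ (mul_ne_zero hc (sub_ne_zero_of_ne hab))
  rw [e1, hfb, zero_add, hsame]
  have h0 : g (-b) + ∑ t ∈ univ.erase (-b), g t = 0 := by rw [← e2, step2]
  rw [hgb] at h0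
  linear_combination h0

lemma innerSumLem (χ : MulChar F ℂ) (hχ : χ ≠ 1) (u1 u2 : F) :
    ∑ t : F, χ (t * t⁻¹ * ((u1+1)*(u2+1)⁻¹*u1⁻¹*u2 * (t+u1) * (t+u2)⁻¹))
    = (if u1 = u2 then (Fintype.card F : ℂ) - 1 else -1) * χ ((u1+1)*(u2+1)⁻¹*u1⁻¹*u2)
      - χ ((u1+1)*(u2+1)⁻¹*u1⁻¹*u2 * u1 * u2⁻¹) := by
  set c := (u1+1)*(u2+1)⁻¹*u1⁻¹*u2 with hc
  have key : ∑ t : F, χ (c * (t+u1) * (t+u2)⁻¹)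
      = (if u1 = u2 then (Fintype.card F : ℂ) - 1 else -1) * χ c := by
    rcases eq_or_ne u1 u2 with h | h
    · subst h
      rw [if_pos rfl, lemD χ c u1]
    · rw [if_neg h, lemM χ hχ c u1 u2 h]
      ring
  set f : F → ℂ := fun t => χ (t * t⁻¹ * (c * (t+u1) * (t+u2)⁻¹)) with hf
  set g : F → ℂ := fun t => χ (c * (t+u1) * (t+u2)⁻¹) with hg
  have e1 : ∑ t : F, f t = f 0 + ∑ t ∈ univ.erase 0, f t :=
    (Finset.add_sum_erase univ f (mem_univ 0)).symm
  have e2 : ∑ t : F, g t = g 0 + ∑ t ∈ univ.erase 0, g t :=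
    (Finset.add_sum_erase univ g (mem_univ 0)).symm
  have hf0 : f 0 = 0 := by simp [hf, χ.map_zero]
  have hg0 : g 0 = χ (c * u1 * u2⁻¹) := by simp [hg]
  have hsame : ∑ t ∈ univ.erase 0, f t = ∑ t ∈ univ.erase 0, g t := by
    refine Finset.sum_congr rfl (fun t ht => ?_)
    have ht0 : t ≠ 0 := (Finset.mem_erase.mp ht).1
    simp only [hf, hg, mul_inv_cancel₀ ht0, one_mul]
  rw [e1, hf0, zero_add, hsame]
  have h0 : g 0 + ∑ t ∈ univ.erase 0, g t
      = (if u1 = u2 then (Fintype.card F : ℂ) - 1 else -1) * χ c := by rw [← e2, key]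
  rw [hg0] at h0
  linear_combination h0

lemma conj_chi (χ : MulChar F ℂ) (x : F) : (starRingEnd ℂ) (χ x) = χ x⁻¹ := by
  rw [← MulChar.inv_apply', ← MulChar.star_apply']
  rfl

lemma chi_shift (χ : MulChar F ℂ) (hχ : χ ≠ 1) (d : F) : ∑ u : F, χ (u + d) = 0 := by
  rw [← chi_sum χ hχ]
  exact Fintype.sum_equiv (Equiv.addRight d) _ _ (fun x => rfl)

lemma chi_inv_shift (χ : MulChar F ℂ) (hχ : χ ≠ 1) : ∑ u : F, χ (u⁻¹ + 1) = 0 := by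
  rw [← chi_shift χ hχ 1]
  exact Fintype.sum_equiv (Equiv.inv F) _ _ (fun x => rfl)

lemma Sg (χ : MulChar F ℂ) (hχ : χ ≠ 1) : ∑ u : F, χ ((u + 1) * u⁻¹) = -1 := by
  set f : F → ℂ := fun u => χ ((u + 1) * u⁻¹) with hf
  set g : F → ℂ := fun u => χ (u⁻¹ + 1) with hg
  have e1 : ∑ u : F, f u = f 0 + ∑ u ∈ univ.erase 0, f u :=
    (Finset.add_sum_erase univ f (mem_univ 0)).symm
  have e2 : ∑ u : F, g u = g 0 + ∑ u ∈ univ.erase 0, g u :=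
    (Finset.add_sum_erase univ g (mem_univ 0)).symm
  have hf0 : f 0 = 0 := by simp [hf, χ.map_zero]
  have hg0 : g 0 = 1 := by simp [hg]
  have hsame : ∑ u ∈ univ.erase 0, f u = ∑ u ∈ univ.erase 0, g u := by
    refine Finset.sum_congr rfl (fun u hu => ?_)
    have hu0 : u ≠ 0 := (Finset.mem_erase.mp hu).1
    simp only [hf, hg]
    congr 1
    field_simp
    ring
  have h0 : g 0 + ∑ u ∈ univ.erase 0, g u = 0 := by rw [← e2, chi_inv_shift χ hχ]
  rw [e1, hf0, zero_add, hsame]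
  rw [hg0] at h0
  linear_combination h0

lemma Sk (χ : MulChar F ℂ) (hχ : χ ≠ 1) : ∑ u : F, χ ((u + 1) * (u * u⁻¹)) = -1 := by
  set f : F → ℂ := fun u => χ ((u + 1) * (u * u⁻¹)) with hf
  set g : F → ℂ := fun u => χ (u + 1) with hg
  have e1 : ∑ u : F, f u = f 0 + ∑ u ∈ univ.erase 0, f u :=
    (Finset.add_sum_erase univ f (mem_univ 0)).symm
  have e2 : ∑ u : F, g u = g 0 + ∑ u ∈ univ.erase 0, g u :=
    (Finset.add_sum_erase univ g (mem_univ 0)).symm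
  have hf0 : f 0 = 0 := by simp [hf, χ.map_zero]
  have hg0 : g 0 = 1 := by simp [hg]
  have hsame : ∑ u ∈ univ.erase 0, f u = ∑ u ∈ univ.erase 0, g u := by
    refine Finset.sum_congr rfl (fun u hu => ?_)
    have hu0 : u ≠ 0 := (Finset.mem_erase.mp hu).1
    simp only [hf, hg, mul_inv_cancel₀ hu0, mul_one]
  have h0 : g 0 + ∑ u ∈ univ.erase 0, g u = 0 := by rw [← e2, chi_shift χ hχ 1]
  rw [e1, hf0, zero_add, hsame]
  rw [hg0] at h0
  linear_combination h0

lemma Sg' (χ : MulChar F ℂ) (hχ : χ ≠ 1) : ∑ u : F, χ (((u + 1) * u⁻¹)⁻¹) = -1 := by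
  have := congrArg (starRingEnd ℂ) (Sg χ hχ)
  rw [map_sum] at this
  simp only [conj_chi] at this
  simpa using this

lemma Sk' (χ : MulChar F ℂ) (hχ : χ ≠ 1) : ∑ u : F, χ (((u + 1) * (u * u⁻¹))⁻¹) = -1 := by
  have := congrArg (starRingEnd ℂ) (Sk χ hχ)
  rw [map_sum] at this
  simp only [conj_chi] at this
  simpa using this

lemma diag_val (χ : MulChar F ℂ) (u : F) :
    χ ((u + 1) * u⁻¹) * χ (((u + 1) * u⁻¹)⁻¹) = if u = 0 ∨ u = -1 then 0 else 1 := by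
  rw [← map_mul]
  rcases eq_or_ne u 0 with h | h
  · simp [h, χ.map_zero]
  rcases eq_or_ne u (-1) with h1 | h1
  · simp [h1, χ.map_zero]
  have hg : (u + 1) * u⁻¹ ≠ 0 := by
    apply mul_ne_zero
    · intro hh; exact h1 (by linear_combination hh)
    · exact inv_ne_zero h
  rw [if_neg (by tauto), mul_inv_cancel₀ hg, χ.map_one]

lemma count2 : ∑ u : F, (if u = 0 ∨ u = -1 then 0 else (1:ℂ)) = (Fintype.card F : ℂ) - 2 := by
  classical
  have hfilter : univ.filter (fun u : F => u = 0 ∨ u = -1) = {0, -1} := by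
    ext u; simp
  have h01 : (0:F) ≠ -1 := by
    intro h
    have h2 : (1:F) = 0 := by linear_combination h
    exact one_ne_zero h2
  rw [Finset.sum_ite, Finset.sum_const, Finset.sum_const, hfilter]
  have hcard2 : ({0, -1} : Finset F).card = 2 := by
    rw [Finset.card_insert_of_notMem (by simp [h01]), Finset.card_singleton]
  have := Finset.card_filter_add_card_filter_not (s := univ)
    (p := fun u : F => u = 0 ∨ u = -1)
  rw [hfilter, hcard2] at this
  rw [Finset.filter_not, hfilter] at *
  rw [Finset.card_univ] at this
  have hc : (univ \ {0, -1} : Finset F).card = Fintype.card F - 2 := by omega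
  rw [smul_zero, zero_add, hc, nsmul_eq_mul, mul_one]
  have h2q : 2 ≤ Fintype.card F := Fintype.one_lt_card
  push_cast [Nat.cast_sub h2q]
  ring

lemma key_split (X Y : F → F → ℂ) :
    (∑ u1 : F, ∑ v1 : F, ∑ u2 : F, ∑ v2 : F,
        if u1 * v1 = u2 * v2 then X u1 v1 * Y u2 v2 else 0)
    = ∑ t : F, (∑ u1 : F, ∑ v1 : F, if u1 * v1 = t then X u1 v1 else 0) *
        (∑ u2 : F, ∑ v2 : F, if u2 * v2 = t then Y u2 v2 else 0) := by
  have lhs_eq : (∑ u1 : F, ∑ v1 : F, ∑ u2 : F, ∑ v2 : F,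
        if u1 * v1 = u2 * v2 then X u1 v1 * Y u2 v2 else 0)
      = ∑ u1 : F, ∑ v1 : F, ∑ u2 : F, ∑ v2 : F, ∑ t : F,
        if u1 * v1 = t then (if u2 * v2 = t then X u1 v1 * Y u2 v2 else 0) else 0 := by
    refine sum_congr rfl fun u1 _ => sum_congr rfl fun v1 _ =>
      sum_congr rfl fun u2 _ => sum_congr rfl fun v2 _ => ?_
    rw [Finset.sum_ite_eq univ (u1*v1)
      (fun t => if u2 * v2 = t then X u1 v1 * Y u2 v2 else 0)]
    simp only [mem_univ, if_true]
    congr 1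
    exact propext ⟨Eq.symm, Eq.symm⟩
  rw [lhs_eq]
  have rhs_eq : (∑ t : F, (∑ u1 : F, ∑ v1 : F, if u1 * v1 = t then X u1 v1 else 0) *
        (∑ u2 : F, ∑ v2 : F, if u2 * v2 = t then Y u2 v2 else 0))
      = ∑ t : F, ∑ u1 : F, ∑ v1 : F, ∑ u2 : F, ∑ v2 : F,
        if u1 * v1 = t then (if u2 * v2 = t then X u1 v1 * Y u2 v2 else 0) else 0 := by
    refine sum_congr rfl fun t _ => ?_
    rw [Finset.sum_mul_sum]
    refine sum_congr rfl fun u1 _ => ?_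
    calc (∑ u2 : F, (∑ v1 : F, if u1 * v1 = t then X u1 v1 else 0) *
            (∑ v2 : F, if u2 * v2 = t then Y u2 v2 else 0))
        = ∑ u2 : F, ∑ v1 : F, ∑ v2 : F,
            (if u1 * v1 = t then X u1 v1 else 0) * (if u2 * v2 = t then Y u2 v2 else 0) := by
          exact sum_congr rfl fun u2 _ => Finset.sum_mul_sum _ _ _ _
      _ = ∑ v1 : F, ∑ u2 : F, ∑ v2 : F,
            (if u1 * v1 = t then X u1 v1 else 0) * (if u2 * v2 = t then Y u2 v2 else 0) :=
          Finset.sum_comm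
      _ = ∑ v1 : F, ∑ u2 : F, ∑ v2 : F,
            (if u1 * v1 = t then (if u2 * v2 = t then X u1 v1 * Y u2 v2 else 0) else 0) := by
          refine sum_congr rfl fun v1 _ => sum_congr rfl fun u2 _ => sum_congr rfl fun v2 _ => ?_
          split_ifs <;> simp
  rw [rhs_eq]
  symm
  rw [Finset.sum_comm]
  refine sum_congr rfl fun u1 _ => ?_
  rw [Finset.sum_comm]
  refine sum_congr rfl fun v1 _ => ?_
  rw [Finset.sum_comm]
  refine sum_congr rfl fun u2 _ => ?_
  rw [Finset.sum_comm]

lemma v_elim (χ : MulChar F ℂ) (t : F) :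
    (∑ u : F, ∑ v : F, if u * v = t then χ (u*v*(u+1)*(v+1)) else 0)
    = ∑ u : F, χ t * χ (u+1) * χ ((t+u)*u⁻¹) := by
  refine sum_congr rfl fun u _ => ?_
  rcases eq_or_ne u 0 with h | h
  · subst h
    have hz : ∀ v : F, (if (0:F) * v = t then χ (0*v*(0+1)*(v+1)) else 0) = 0 := by
      intro v; split_ifs <;> simp [χ.map_zero]
    rw [Finset.sum_congr rfl fun v _ => hz v, Finset.sum_const_zero]
    simp [χ.map_zero]
  · have hiff : ∀ v : F, (u * v = t) = (v = u⁻¹ * t) := by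
      intro v
      refine propext ⟨fun hh => ?_, fun hh => ?_⟩
      · rw [← hh, ← mul_assoc, inv_mul_cancel₀ h, one_mul]
      · rw [hh, ← mul_assoc, mul_inv_cancel₀ h, one_mul]
    simp only [hiff]
    rw [Finset.sum_ite_eq' univ (u⁻¹*t) (fun v => χ (u*v*(u+1)*(v+1)))]
    simp only [mem_univ, if_true]
    rw [← map_mul, ← map_mul]
    congr 1
    field_simp

lemma conj_chi' (χ : MulChar F ℂ) (x : F) : (starRingEnd ℂ) (χ x) = χ x⁻¹ := by
  rw [← MulChar.inv_apply', ← MulChar.star_apply']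
  rfl

lemma v_elim' (χ : MulChar F ℂ) (t : F) :
    (∑ u : F, ∑ v : F, if u * v = t then (starRingEnd ℂ) (χ (u*v*(u+1)*(v+1))) else 0)
    = ∑ u : F, χ t⁻¹ * χ ((u+1)⁻¹) * χ (((t+u)*u⁻¹)⁻¹) := by
  have h1 : (∑ u : F, ∑ v : F, if u * v = t then (starRingEnd ℂ) (χ (u*v*(u+1)*(v+1))) else 0)
      = (starRingEnd ℂ) (∑ u : F, ∑ v : F, if u * v = t then χ (u*v*(u+1)*(v+1)) else 0) := by
    rw [map_sum]
    refine sum_congr rfl fun u _ => ?_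
    rw [map_sum]
    refine sum_congr rfl fun v _ => ?_
    rw [apply_ite (starRingEnd ℂ), map_zero]
  rw [h1, v_elim χ t, map_sum]
  refine sum_congr rfl fun u _ => ?_
  rw [map_mul, map_mul, conj_chi', conj_chi', conj_chi']

lemma ab_merge (χ : MulChar F ℂ) (u1 u2 t : F) :
    (χ t * χ (u1+1) * χ ((t+u1)*u1⁻¹)) * (χ t⁻¹ * χ ((u2+1)⁻¹) * χ (((t+u2)*u2⁻¹)⁻¹))
    = χ (t * t⁻¹ * ((u1+1)*(u2+1)⁻¹*u1⁻¹*u2 * (t+u1) * (t+u2)⁻¹)) := by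
  rw [← map_mul, ← map_mul, ← map_mul, ← map_mul, ← map_mul]
  congr 1
  simp only [mul_inv, inv_inv]
  ring

end Helpers

/-- Lemma 13.2: for a finite field `F` with `q` elements and a nontrivial
multiplicative character `χ` of `F` (extended by `χ(0) = 0`),
`Σ_{u₁ v₁ = u₂ v₂} χ(u₁ v₁ (u₁+1)(v₁+1)) conj(χ(u₂ v₂ (u₂+1)(v₂+1))) = q² − 2q − 2`. -/
theorem lemma_13_2 (F : Type*) [Field F] [Fintype F] [DecidableEq F]
    (χ : MulChar F ℂ) (hχ : χ ≠ 1) :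
    (∑ u1 : F, ∑ v1 : F, ∑ u2 : F, ∑ v2 : F,
        if u1 * v1 = u2 * v2 then
          χ (u1 * v1 * (u1 + 1) * (v1 + 1)) *
            (starRingEnd ℂ) (χ (u2 * v2 * (u2 + 1) * (v2 + 1)))
        else 0) =
      (Fintype.card F : ℂ) ^ 2 - 2 * (Fintype.card F : ℂ) - 2 := by
  set q : ℂ := (Fintype.card F : ℂ) with hq
  have h0 := key_split (fun u v => χ (u*v*(u+1)*(v+1)))
    (fun u v => (starRingEnd ℂ) (χ (u*v*(u+1)*(v+1))))
  rw [h0]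
  have h1 : ∀ t : F, (∑ u1 : F, ∑ v1 : F, if u1 * v1 = t then χ (u1*v1*(u1+1)*(v1+1)) else 0) *
      (∑ u2 : F, ∑ v2 : F, if u2 * v2 = t then (starRingEnd ℂ) (χ (u2*v2*(u2+1)*(v2+1))) else 0)
      = ∑ u1 : F, ∑ u2 : F,
        (χ t * χ (u1+1) * χ ((t+u1)*u1⁻¹)) * (χ t⁻¹ * χ ((u2+1)⁻¹) * χ (((t+u2)*u2⁻¹)⁻¹)) := by
    intro t
    rw [v_elim χ t, v_elim' χ t, Finset.sum_mul_sum]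
  rw [Finset.sum_congr rfl fun t _ => h1 t]
  rw [Finset.sum_comm]
  refine Eq.trans (Finset.sum_congr rfl fun u1 _ => Finset.sum_comm) ?_
  have h2 : ∀ u1 u2 : F, (∑ t : F,
      (χ t * χ (u1+1) * χ ((t+u1)*u1⁻¹)) * (χ t⁻¹ * χ ((u2+1)⁻¹) * χ (((t+u2)*u2⁻¹)⁻¹)))
      = (-(χ ((u1+1)*u1⁻¹) * χ (((u2+1)*u2⁻¹)⁻¹))
          - χ ((u1+1)*(u1*u1⁻¹)) * χ (((u2+1)*(u2*u2⁻¹))⁻¹))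
        + (if u1 = u2 then q * (χ ((u1+1)*u1⁻¹) * χ (((u2+1)*u2⁻¹)⁻¹)) else 0) := by
    intro u1 u2
    rw [Finset.sum_congr rfl fun t _ => ab_merge χ u1 u2 t, innerSumLem χ hχ u1 u2]
    have e1 : χ ((u1+1)*(u2+1)⁻¹*u1⁻¹*u2) = χ ((u1+1)*u1⁻¹) * χ (((u2+1)*u2⁻¹)⁻¹) := by
      rw [← map_mul]
      congr 1
      simp only [mul_inv, inv_inv]
      ring
    have e2 : χ ((u1+1)*(u2+1)⁻¹*u1⁻¹*u2 * u1 * u2⁻¹)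
        = χ ((u1+1)*(u1*u1⁻¹)) * χ (((u2+1)*(u2*u2⁻¹))⁻¹) := by
      rw [← map_mul]
      congr 1
      simp only [mul_inv, inv_inv]
      ring
    rw [e1, e2]
    rcases eq_or_ne u1 u2 with h | h
    · rw [if_pos h, if_pos h]
      ring
    · rw [if_neg h, if_neg h]
      ring
  rw [Finset.sum_congr rfl fun u1 (_ : u1 ∈ univ) =>
    Finset.sum_congr rfl fun u2 (_ : u2 ∈ univ) => h2 u1 u2]
  simp only [Finset.sum_add_distrib]
  have hP1 : (∑ u1 : F, ∑ u2 : F,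
      (-(χ ((u1+1)*u1⁻¹) * χ (((u2+1)*u2⁻¹)⁻¹))
        - χ ((u1+1)*(u1*u1⁻¹)) * χ (((u2+1)*(u2*u2⁻¹))⁻¹))) = -2 := by
    have hrow : ∀ u1 : F, (∑ u2 : F,
        (-(χ ((u1+1)*u1⁻¹) * χ (((u2+1)*u2⁻¹)⁻¹))
          - χ ((u1+1)*(u1*u1⁻¹)) * χ (((u2+1)*(u2*u2⁻¹))⁻¹)))
        = χ ((u1+1)*u1⁻¹) + χ ((u1+1)*(u1*u1⁻¹)) := by
      intro u1
      rw [Finset.sum_sub_distrib, Finset.sum_neg_distrib, ← Finset.mul_sum, ← Finset.mul_sum,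
        Sg' χ hχ, Sk' χ hχ]
      ring
    rw [Finset.sum_congr rfl fun u1 _ => hrow u1, Finset.sum_add_distrib, Sg χ hχ, Sk χ hχ]
    norm_num
  have hP2 : (∑ u1 : F, ∑ u2 : F,
      (if u1 = u2 then q * (χ ((u1+1)*u1⁻¹) * χ (((u2+1)*u2⁻¹)⁻¹)) else 0)) = q * (q - 2) := by
    have hrow : ∀ u1 : F, (∑ u2 : F,
        (if u1 = u2 then q * (χ ((u1+1)*u1⁻¹) * χ (((u2+1)*u2⁻¹)⁻¹)) else 0))
        = q * (if u1 = 0 ∨ u1 = -1 then 0 else 1) := by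
      intro u1
      rw [Finset.sum_ite_eq univ u1
        (fun u2 => q * (χ ((u1+1)*u1⁻¹) * χ (((u2+1)*u2⁻¹)⁻¹)))]
      simp only [mem_univ, if_true]
      rw [diag_val χ u1]
    rw [Finset.sum_congr rfl fun u1 _ => hrow u1, ← Finset.mul_sum, count2]
  rw [hP1, hP2]
  ring
end

section
/- Let p be an odd prime and χ the Legendre symbol modulo p. Then | Σ_{u, v mod p} χ( u v (u + 1)(v + 1)(u v − 1) ) | ≤ 4p. -/
/-- `e_c(x) = exp(2πix/c)`. -/
noncomputable def ec (c : ℕ) (x : ℤ) : ℂ :=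
  Complex.exp (2 * Real.pi * Complex.I * x / c)

/-- The Kloosterman sum `S(m, n; c) = Σ_{a d ≡ 1 (mod c)} e_c(a m + d n)`. -/
noncomputable def kloos (m n : ℤ) (c : ℕ) : ℂ :=
  ∑ a ∈ Finset.range c, ∑ d ∈ Finset.range c,
    if (a * d) % c = 1 % c then ec c (a * m + d * n) else 0

/-- `G(m, m₁, m₂; c)` : complete sum of Kloosterman sums twisted by `χ_q`, for `q ∣ c`. -/
noncomputable def Gsum (q : ℕ) (m m1 m2 : ℤ) (c : ℕ) : ℂ :=
  ∑ a ∈ Finset.range c, ∑ a1 ∈ Finset.range c, ∑ a2 ∈ Finset.range c,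
    (jacobiSym ((a : ℤ) * a1 * a2) q : ℂ) * kloos a ((a1 : ℤ) * a2) c *
      ec c (a * m + a1 * m1 + a2 * m2)

/-- `G'(m, m₁, m₂; c) = e_c(−m m₁ m₂) G(m, m₁, m₂; c)`. -/
noncomputable def Gsum' (q : ℕ) (m m1 m2 : ℤ) (c : ℕ) : ℂ :=
  ec c (-(m * m1 * m2)) * Gsum q m m1 m2 c

/-- `H_r(m, m₁, m₂; q) = Σ_{u,v mod q} χ_q(v (u + v m₁)(v r − m)(u r + m m₁)) e_q(u m₂)`. -/
noncomputable def Hr (r m m1 m2 : ℤ) (q : ℕ) : ℂ :=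
  ∑ u ∈ Finset.range q, ∑ v ∈ Finset.range q,
    (jacobiSym ((v : ℤ) * ((u : ℤ) + v * m1) * ((v : ℤ) * r - m) * ((u : ℤ) * r + m * m1)) q : ℂ) *
      ec q (u * m2)

/-- `H(w; q) = Σ_{u,v mod q} χ_q(u v (u+1)(v+1)) e_q((u v − 1) w)`. -/
noncomputable def Hw (w : ℤ) (q : ℕ) : ℂ :=
  ∑ u ∈ Finset.range q, ∑ v ∈ Finset.range q,
    (jacobiSym ((u : ℤ) * v * ((u : ℤ) + 1) * ((v : ℤ) + 1)) q : ℂ) *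
      ec q (((u : ℤ) * v - 1) * w)

/-- Reduced sum `H*(w; q)`, restricted by `gcd(uv − 1, q) = 1`. -/
noncomputable def Hstar (w : ℤ) (q : ℕ) : ℂ :=
  ∑ u ∈ Finset.range q, ∑ v ∈ Finset.range q,
    if Int.gcd ((u : ℤ) * v - 1) q = 1 then
      (jacobiSym ((u : ℤ) * v * ((u : ℤ) + 1) * ((v : ℤ) + 1)) q : ℂ) *
        ec q (((u : ℤ) * v - 1) * w)
    else 0

/-- The Ramanujan sum `R(n; k) = Σ_{d mod k, (d,k)=1} e_k(d n)`. -/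
noncomputable def Ram (n : ℤ) (k : ℕ) : ℂ :=
  ∑ d ∈ Finset.range k, if Nat.gcd d k = 1 then ec k (d * n) else 0

/-- The Gauss sum `τ(χ_q) = Σ_{x mod q} χ_q(x) e_q(x)`. -/
noncomputable def gaussτ (q : ℕ) : ℂ :=
  ∑ x ∈ Finset.range q, (jacobiSym (x : ℤ) q : ℂ) * ec q (x : ℤ)

open Finset

namespace GChiAux

variable {F : Type*} [Field F] [Fintype F] [DecidableEq F]

local notation "χ" => quadraticChar F

lemma chi_sq_mul {x : F} (hx : x ≠ 0) (c : F) : χ (x ^ 2 * c) = χ c := by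
  rw [map_mul, quadraticChar_sq_one' hx, one_mul]

lemma chi_abs_le (a : F) : |χ a| ≤ 1 := by
  rcases eq_or_ne a 0 with h | h
  · simp [h]
  · rcases quadraticChar_dichotomy h with h1 | h1 <;> rw [h1] <;> norm_num

section charne

variable (hF : ringChar F ≠ 2)
include hF

lemma sum_chi_shift (a : F) : ∑ z : F, χ (z + a) = 0 :=
  (Fintype.sum_equiv (Equiv.addRight a) _ _ (fun _ => rfl)).trans
    (quadraticChar_sum_zero hF)

lemma sum_chi_mul_base {d : F} (hd : d ≠ 0) : ∑ z : F, χ (z * (z + d)) = -1 :=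
  calc ∑ z : F, χ (z * (z + d))
      = ∑ z ∈ univ.erase (0 : F), χ (z * (z + d)) := by
        rw [Finset.sum_erase_eq_sub (mem_univ 0)]; simp
    _ = ∑ y ∈ univ.erase (1 : F), χ y := by
        refine Finset.sum_nbij' (i := fun z => 1 + d * z⁻¹) (j := fun y => d * (y - 1)⁻¹)
          ?_ ?_ ?_ ?_ ?_
        · intro z hz
          have hz0 : z ≠ 0 := (Finset.mem_erase.mp hz).1
          simp only [mem_erase, mem_univ, and_true]
          intro h
          have h2 : d * z⁻¹ = 0 := by linear_combination h
          rcases mul_eq_zero.mp h2 with h' | h'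
          · exact hd h'
          · exact hz0 (inv_eq_zero.mp h')
        · intro y hy
          have hy1 : y ≠ 1 := (Finset.mem_erase.mp hy).1
          simp only [mem_erase, mem_univ, and_true]
          intro h
          rcases mul_eq_zero.mp h with h' | h'
          · exact hd h'
          · exact hy1 (by rwa [inv_eq_zero, sub_eq_zero] at h')
        · intro z hz
          have hz0 : z ≠ 0 := (Finset.mem_erase.mp hz).1
          field_simp
          rw [add_sub_cancel_left, div_self hd]
        · intro y hy
          have hy1 : y ≠ 1 := (Finset.mem_erase.mp hy).1
          have hy2 : y - 1 ≠ 0 := sub_ne_zero.mpr hy1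
          field_simp
          ring
        · intro z hz
          have hz0 : z ≠ 0 := (Finset.mem_erase.mp hz).1
          have h2 : z * (z + d) = z ^ 2 * (1 + d * z⁻¹) := by field_simp
          rw [h2, chi_sq_mul hz0]
    _ = -1 := by
        rw [Finset.sum_erase_eq_sub (mem_univ 1), quadraticChar_sum_zero hF]; simp

/-- `∑ n, χ((n+a)(n+b)) = q - 1` if `a = b`, else `-1`. -/
lemma sum_chi_mul_shift (a b : F) :
    ∑ z : F, χ ((z + a) * (z + b)) =
      if a = b then (Fintype.card F : ℤ) - 1 else -1 := by
  split_ifs with h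
  · subst h
    calc ∑ z : F, χ ((z + a) * (z + a))
        = ∑ z : F, (if z + a = 0 then 0 else 1) := by
          refine Finset.sum_congr rfl fun z _ => ?_
          split_ifs with h'
          · simp [h']
          · rw [show (z + a) * (z + a) = (z + a) ^ 2 * 1 by ring, chi_sq_mul h', map_one]
      _ = ∑ z : F, (if z = -a then 0 else 1) := by
          refine Finset.sum_congr rfl fun z _ => ?_
          congr 1
          simp [add_eq_zero_iff_eq_neg]
      _ = (Fintype.card F : ℤ) - 1 := by
          have h2 : ∀ z : F, (if z = -a then (0:ℤ) else 1) = 1 - (if z = -a then 1 else 0) := by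
            intro z; split_ifs <;> ring
          rw [Finset.sum_congr rfl (fun z _ => h2 z), Finset.sum_sub_distrib,
            Finset.sum_const, Finset.sum_ite_eq' univ (-a) (fun _ => (1:ℤ))]
          simp [Finset.card_univ]
  · have hd : b - a ≠ 0 := sub_ne_zero.mpr (Ne.symm h)
    calc ∑ z : F, χ ((z + a) * (z + b))
        = ∑ z : F, χ (z * (z + (b - a))) := by
          refine Fintype.sum_equiv (Equiv.addRight a) _ _ fun z => ?_
          simp only [Equiv.coe_addRight]
          ring_nf
      _ = -1 := sum_chi_mul_base hF hd

/-- Number of square roots: `∑ d, g (d^2) = ∑ s, (χ s + 1) * g s`. -/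
lemma sum_sq_index (g : F → ℤ) :
    ∑ d : F, g (d ^ 2) = ∑ s : F, (χ s + 1) * g s := by
  have h := Finset.sum_fiberwise (univ : Finset F) (fun d => d ^ 2) (fun d => g (d ^ 2))
  rw [← h]
  refine Finset.sum_congr rfl fun s _ => ?_
  have h1 : ∑ d ∈ univ.filter (fun d : F => d ^ 2 = s), g (d ^ 2)
      = ∑ d ∈ univ.filter (fun d : F => d ^ 2 = s), g s := by
    refine Finset.sum_congr rfl fun d hd => ?_
    rw [(Finset.mem_filter.mp hd).2]
  rw [h1, Finset.sum_const, nsmul_eq_mul]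
  congr 1
  have h2 := quadraticChar_card_sqrts hF s
  rw [← h2]
  congr 1
  rw [Set.toFinset_setOf]

/-- Key "2-isogeny" identity:
`∑ m, χ(m(m²+am+b)) = ∑ z, χ((z+a)(z²-4b))` for `b ≠ 0`. -/
lemma isogeny (a : F) {b : F} (hb : b ≠ 0) :
    ∑ m : F, χ (m * (m ^ 2 + a * m + b)) = ∑ z : F, χ ((z + a) * (z ^ 2 - 4 * b)) := by
  have h2 : (2 : F) ≠ 0 := Ring.two_ne_zero hF
  -- RHS = ∑_z χ(z+a) * (χ(z²-4b)+1)  (since ∑ χ(z+a) = 0)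
  have step1 : ∑ z : F, χ ((z + a) * (z ^ 2 - 4 * b))
      = ∑ z : F, χ (z + a) * (χ (z ^ 2 - 4 * b) + 1) := by
    have e1 : ∑ z : F, χ (z + a) * (χ (z ^ 2 - 4 * b) + 1)
        = ∑ z : F, (χ ((z + a) * (z ^ 2 - 4 * b)) + χ (z + a)) := by
      refine Finset.sum_congr rfl fun z _ => ?_
      rw [map_mul]; ring
    rw [e1, Finset.sum_add_distrib, sum_chi_shift hF a, add_zero]
  -- counting: χ(c)+1 = #{y : y² = c}
  have step2 : ∀ z : F, χ (z + a) * (χ (z ^ 2 - 4 * b) + 1)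
      = ∑ y : F, (if y ^ 2 = z ^ 2 - 4 * b then χ (z + a) else 0) := by
    intro z
    have hc := quadraticChar_card_sqrts hF (z ^ 2 - 4 * b)
    rw [Set.toFinset_setOf] at hc
    rw [← Finset.sum_filter, Finset.sum_const, nsmul_eq_mul, hc]
    ring
  -- pair sum ↔ sum over m ≠ 0 via m ↦ (m + b/m, m - b/m)
  have h4 : (4 : F) ≠ 0 := by
    intro h
    have : (2 : F) * 2 = 0 := by linear_combination h
    rcases mul_eq_zero.mp this with h' | h' <;> exact h2 h'
  have hne : ∀ z y : F, y ^ 2 = z ^ 2 - 4 * b → (z + y) / 2 ≠ 0 := by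
    intro z y hzy h
    rcases div_eq_zero_iff.mp h with h' | h'
    · have hzy2 : y = -z := by linear_combination h'
      rw [hzy2] at hzy
      have h40 : (4 : F) * b = 0 := by linear_combination hzy
      rcases mul_eq_zero.mp h40 with h'' | h''
      · exact h4 h''
      · exact hb h''
    · exact h2 h'
  have hkey : ∀ z y : F, y ^ 2 = z ^ 2 - 4 * b → b * ((z + y) / 2)⁻¹ = (z - y) / 2 := by
    intro z y hzy
    have hprod : (z - y) / 2 * ((z + y) / 2) = b := by
      rw [div_mul_div_comm, div_eq_iff (mul_ne_zero h2 h2)]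
      linear_combination -hzy
    rw [eq_comm, eq_mul_inv_iff_mul_eq₀ (hne z y hzy)]
    exact hprod
  have step3 : ∑ z : F, ∑ y : F, (if y ^ 2 = z ^ 2 - 4 * b then χ (z + a) else 0)
      = ∑ m ∈ univ.erase (0 : F), χ (m + b * m⁻¹ + a) := by
    have e1 : ∑ z : F, ∑ y : F, (if y ^ 2 = z ^ 2 - 4 * b then χ (z + a) else 0)
        = ∑ zy ∈ (univ ×ˢ univ : Finset (F × F)).filter
            (fun zy => zy.2 ^ 2 = zy.1 ^ 2 - 4 * b), χ (zy.1 + a) := by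
      rw [Finset.sum_filter, ← Finset.sum_product']
    rw [e1]
    refine Finset.sum_nbij' (i := fun zy : F × F => (zy.1 + zy.2) / 2)
      (j := fun m : F => (m + b * m⁻¹, m - b * m⁻¹)) ?_ ?_ ?_ ?_ ?_
    · rintro ⟨z, y⟩ hzy
      simp only [Finset.mem_filter, Finset.mem_product] at hzy
      simp only [mem_erase, mem_univ, and_true]
      exact hne z y hzy.2
    · intro m hm
      have hm0 : m ≠ 0 := (Finset.mem_erase.mp hm).1
      simp only [Finset.mem_filter, Finset.mem_product, mem_univ, and_true, true_and]
      field_simp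
      ring
    · rintro ⟨z, y⟩ hzy
      simp only [Finset.mem_filter, Finset.mem_product] at hzy
      have key := hkey z y hzy.2
      ext
      · show (z + y) / 2 + b * ((z + y) / 2)⁻¹ = z
        rw [key, ← add_div, div_eq_iff h2]; ring
      · show (z + y) / 2 - b * ((z + y) / 2)⁻¹ = y
        rw [key, ← sub_div, div_eq_iff h2]; ring
    · intro m hm
      have hm0 : m ≠ 0 := (Finset.mem_erase.mp hm).1
      show (m + b * m⁻¹ + (m - b * m⁻¹)) / 2 = m
      field_simp
      ring
    · rintro ⟨z, y⟩ hzy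
      simp only [Finset.mem_filter, Finset.mem_product] at hzy
      have key := hkey z y hzy.2
      show χ (z + a) = χ ((z + y) / 2 + b * ((z + y) / 2)⁻¹ + a)
      rw [key, show (z + y) / 2 + (z - y) / 2 + a = (z + y + (z - y)) / 2 + a by ring,
        show (z + y + (z - y)) = z * 2 by ring, mul_div_assoc, div_self h2, mul_one]
  have step4 : ∑ m ∈ univ.erase (0 : F), χ (m + b * m⁻¹ + a)
      = ∑ m : F, χ (m * (m ^ 2 + a * m + b)) := by
    have e1 : ∑ m ∈ univ.erase (0 : F), χ (m + b * m⁻¹ + a)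
        = ∑ m ∈ univ.erase (0 : F), χ (m * (m ^ 2 + a * m + b)) :=
      Finset.sum_congr rfl fun m hm => by
        have hm0 : m ≠ 0 := (Finset.mem_erase.mp hm).1
        have e2 : m * (m ^ 2 + a * m + b) = m ^ 2 * (m + b * m⁻¹ + a) := by
          field_simp; ring
        rw [e2, chi_sq_mul hm0]
    rw [e1, Finset.sum_erase_eq_sub (mem_univ 0)]
    simp
  calc ∑ m : F, χ (m * (m ^ 2 + a * m + b))
      = ∑ m ∈ univ.erase (0 : F), χ (m + b * m⁻¹ + a) := step4.symm
    _ = ∑ z : F, ∑ y : F, (if y ^ 2 = z ^ 2 - 4 * b then χ (z + a) else 0) := step3.symm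
    _ = ∑ z : F, χ (z + a) * (χ (z ^ 2 - 4 * b) + 1) := by
        exact Finset.sum_congr rfl fun z _ => (step2 z).symm
    _ = ∑ z : F, χ ((z + a) * (z ^ 2 - 4 * b)) := step1.symm

/-- `∑ m, χ(m(m+1)²) = -χ(-1)`. -/
lemma sum_m_mul_sq : ∑ m : F, χ (m * (m + 1) ^ 2) = -χ (-1) := by
  have e1 : ∑ m : F, χ (m * (m + 1) ^ 2)
      = ∑ m ∈ univ.erase (-1 : F), χ (m * (m + 1) ^ 2) := by
    rw [Finset.sum_erase_eq_sub (mem_univ (-1))]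
    simp
  rw [e1, Finset.sum_congr rfl (fun m hm => ?_), Finset.sum_erase_eq_sub (mem_univ (-1)),
    quadraticChar_sum_zero hF, zero_sub]
  have hm1 : m + 1 ≠ 0 := by
    intro h
    exact (Finset.mem_erase.mp hm).1 (by linear_combination h)
  rw [show m * (m + 1) ^ 2 = (m + 1) ^ 2 * m by ring, chi_sq_mul hm1]

/-- The Legendre-family character sum `M(t) = ∑ z, χ(z(z-1)(z-t))`. -/
def MM (t : F) : ℤ := ∑ z : F, χ (z * (z - 1) * (z - t))

lemma MM_zero : MM (0 : F) = -χ (-1) := by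
  unfold MM
  rw [show ∑ z : F, χ (z * (z - 1) * (z - 0)) = ∑ m : F, χ (m * (m + 1) ^ 2) from
    Fintype.sum_equiv (Equiv.subRight (1 : F)) _ _ (fun z => by simp only [Equiv.subRight_apply]; congr 1; ring)]
  exact sum_m_mul_sq hF

lemma sum_chi_tsub : ∑ z : F, χ (z * (z - 1)) = -1 := by
  have hne : (0 : F) ≠ -1 := by
    intro h
    have h1 : (1 : F) = 0 := by linear_combination h
    exact one_ne_zero h1
  have := sum_chi_mul_shift hF (0 : F) (-1)
  rw [if_neg hne] at this
  rw [← this]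
  refine Finset.sum_congr rfl fun z _ => ?_
  congr 1; ring

/-- Crux auxiliary identity: `∑ s, χ(1-s) M(s) = 1`. -/
lemma sum_B : ∑ s : F, χ (1 - s) * MM s = 1 := by
  have e1 : ∀ s : F, χ (1 - s) * MM s
      = ∑ z : F, χ (z * (z - 1)) * χ ((s + -1) * (s + -z)) := by
    intro s
    unfold MM
    rw [Finset.mul_sum]
    refine Finset.sum_congr rfl fun z _ => ?_
    rw [← map_mul, ← map_mul]
    congr 1; ring
  rw [Finset.sum_congr rfl (fun s _ => e1 s), Finset.sum_comm]
  have e2 : ∀ z : F, ∑ s : F, χ (z * (z - 1)) * χ ((s + -1) * (s + -z))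
      = χ (z * (z - 1)) * (-1) := by
    intro z
    rw [← Finset.mul_sum, sum_chi_mul_shift hF (-1 : F) (-z)]
    rcases eq_or_ne z 1 with h | h
    · subst h; simp
    · rw [if_neg (fun hc => h (by linear_combination hc))]
  rw [Finset.sum_congr rfl (fun z _ => e2 z), ← Finset.sum_mul, sum_chi_tsub hF]
  norm_num

/-- Step A: `S = ∑_t χ(t(t-1)) T(t)` (substitute `t = u v`). -/
lemma step_A : ∑ u : F, ∑ v : F, χ (u * v * (u + 1) * (v + 1) * (u * v - 1))
    = ∑ t : F, ∑ u : F, χ (t * (t - 1) * (u * (u + 1) * (u + t))) := by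
  have e1 : ∀ u : F, ∑ v : F, χ (u * v * (u + 1) * (v + 1) * (u * v - 1))
      = ∑ t : F, χ (t * (t - 1) * (u * (u + 1) * (u + t))) := by
    intro u
    rcases eq_or_ne u 0 with h | h
    · subst h; simp
    · refine Fintype.sum_equiv (Equiv.mulLeft₀ u h) _ _ fun v => ?_
      simp only [Equiv.mulLeft₀_apply]
      rw [show (u * v) * ((u * v) - 1) * (u * (u + 1) * (u + (u * v)))
          = u ^ 2 * (u * v * (u + 1) * (v + 1) * (u * v - 1)) from by ring, chi_sq_mul h]
  rw [Finset.sum_congr rfl fun u _ => e1 u]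
  exact Finset.sum_comm

/-- Step B′: `∑_s χ(s)χ(1-s) M(s) = S₃`. -/
lemma step_Bprime : ∑ s : F, χ s * (χ (1 - s) * MM s)
    = ∑ t : F, ∑ u : F, χ (t * (t - 1) * (u * (u + 1) * (u + t))) := by
  refine Finset.sum_congr rfl fun s _ => ?_
  unfold MM
  rw [Finset.mul_sum, Finset.mul_sum]
  refine (Fintype.sum_equiv (Equiv.neg F) _ _ fun u => ?_).symm
  simp only [Equiv.neg_apply]
  rw [← map_mul, ← map_mul]
  congr 1
  ring

/-- Step C: `D = S₃`. -/
lemma step_C : ∑ w : F, ∑ m : F, χ (w * (m * (m + 1) * (m + w ^ 2)))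
    = ∑ t : F, ∑ u : F, χ (t * (t - 1) * (u * (u + 1) * (u + t))) := by
  have h2 : (2 : F) ≠ 0 := Ring.two_ne_zero hF
  have hm1ne1 : (-1 : F) ≠ 1 := Ring.neg_one_ne_one_of_char_ne_two hF
  have hm1ne0 : (-1 : F) ≠ 0 := neg_ne_zero.mpr one_ne_zero
  set h : F → ℤ := fun w => ∑ m : F, χ (w * (m * (m + 1) * (m + w ^ 2))) with hh
  -- general value for w ∉ {0, 1, -1}
  have hw_gen : ∀ w : F, w ≠ 0 → w ≠ 1 → w ≠ -1 →
      h w = χ w * MM (((1 - w) / (1 + w)) ^ 2) := by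
    intro w hw0 hw1 hwm1
    have h1w : (1 + w) ≠ 0 := fun hc => hwm1 (by linear_combination hc)
    have e1 : h w = χ w * ∑ m : F, χ (m * (m ^ 2 + (1 + w ^ 2) * m + w ^ 2)) := by
      rw [hh, Finset.mul_sum]
      refine Finset.sum_congr rfl fun m _ => ?_
      rw [← map_mul]
      congr 1; ring
    rw [e1, isogeny hF (1 + w ^ 2) (pow_ne_zero 2 hw0)]
    congr 1
    unfold MM
    refine (Fintype.sum_equiv ((Equiv.mulLeft₀ ((1 + w) ^ 2) (pow_ne_zero 2 h1w)).trans
      (Equiv.addRight (-(1 + w ^ 2)))) _ _ fun y => ?_).symm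
    simp only [Equiv.trans_apply, Equiv.mulLeft₀_apply, Equiv.coe_addRight]
    rw [show ((1 + w) ^ 2 * y + -(1 + w ^ 2) + (1 + w ^ 2)) *
        (((1 + w) ^ 2 * y + -(1 + w ^ 2)) ^ 2 - 4 * w ^ 2)
        = ((1 + w) ^ 3) ^ 2 * (y * (y - 1) * (y - ((1 - w) / (1 + w)) ^ 2)) from by
          field_simp; ring, chi_sq_mul (pow_ne_zero 3 h1w)]
  have hw_one : h 1 = -χ (-1) := by
    rw [hh]
    have e1 : ∀ m : F, (1 : F) * (m * (m + 1) * (m + 1 ^ 2)) = m * (m + 1) ^ 2 := by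
      intro m; ring
    simp only
    rw [Finset.sum_congr rfl fun m _ => by rw [e1 m]]
    exact sum_m_mul_sq hF
  have hw_negone : h (-1) = -1 := by
    rw [hh]
    simp only
    have e1 : ∀ m : F, ((-1 : F) * (m * (m + 1) * (m + (-1) ^ 2))) = -1 * (m * (m + 1) ^ 2) := by
      intro m; ring
    rw [Finset.sum_congr rfl fun m _ => by rw [e1 m, map_mul]]
    rw [← Finset.mul_sum, sum_m_mul_sq hF]
    have : χ (-1) * χ (-1) = 1 := by
      rw [← map_mul]
      rw [show ((-1 : F) * -1) = (-1 : F) ^ 2 * 1 from by ring, chi_sq_mul hm1ne0, map_one]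
    rw [mul_neg, this]
  have hw_zero : h 0 = 0 := by
    rw [hh]; simp
  -- split off w = 0, 1, -1
  have hsplit : ∑ w : F, h w
      = ∑ w ∈ ((univ.erase (0 : F)).erase 1).erase (-1), h w + (h (-1) + (h 1 + h 0)) := by
    rw [Finset.sum_erase_eq_sub (a := (-1 : F)) (by
      simp only [mem_erase, mem_univ, and_true]
      exact ⟨hm1ne1, hm1ne0⟩),
      Finset.sum_erase_eq_sub (a := (1 : F)) (by
      simp only [mem_erase, mem_univ, and_true]
      exact one_ne_zero),
      Finset.sum_erase_eq_sub (a := (0 : F)) (mem_univ 0)]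
    ring
  set A : Finset F := ((univ.erase (0 : F)).erase 1).erase (-1) with hA
  have hmemA : ∀ w : F, w ∈ A → w ≠ 0 ∧ w ≠ 1 ∧ w ≠ -1 := by
    intro w hw
    simp only [hA, mem_erase, mem_univ, and_true] at hw
    exact ⟨hw.2.2, hw.2.1, hw.1⟩
  -- involution w ↦ (1-w)/(1+w) on A
  have hinv : ∑ w ∈ A, h w = ∑ d ∈ A, χ (1 - d ^ 2) * MM (d ^ 2) := by
    have e1 : ∑ w ∈ A, h w = ∑ w ∈ A, χ w * MM (((1 - w) / (1 + w)) ^ 2) :=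
      Finset.sum_congr rfl fun w hw => by
        obtain ⟨hw0, hw1, hwm1⟩ := hmemA w hw
        exact hw_gen w hw0 hw1 hwm1
    rw [e1]
    have hmap : ∀ w : F, w ≠ 0 → w ≠ 1 → w ≠ -1 →
        (1 - w) / (1 + w) ≠ 0 ∧ (1 - w) / (1 + w) ≠ 1 ∧ (1 - w) / (1 + w) ≠ -1 := by
      intro w hw0 hw1 hwm1
      have h1w : (1 + w) ≠ 0 := fun hc => hwm1 (by linear_combination hc)
      refine ⟨?_, ?_, ?_⟩
      · intro hc
        rcases div_eq_zero_iff.mp hc with hc' | hc'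
        · exact hw1 (by linear_combination -hc')
        · exact h1w hc'
      · intro hc
        rw [div_eq_iff h1w, one_mul] at hc
        have h2w : (2 : F) * w = 0 := by linear_combination -hc
        exact hw0 ((mul_eq_zero.mp h2w).resolve_left h2)
      · intro hc
        rw [div_eq_iff h1w] at hc
        exact h2 (by linear_combination hc)
    have hkey : ∀ x : F, x ≠ 0 → x ≠ -1 → (1 - (1 - x) / (1 + x)) / (1 + (1 - x) / (1 + x)) = x := by
      intro x hx0 hxm1
      have h1x : 1 + x ≠ 0 := fun hc => hxm1 (by linear_combination hc)
      rw [one_sub_div h1x, one_add_div h1x,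
        show 1 + x - (1 - x) = 2 * x from by ring, show 1 + x + (1 - x) = 2 from by ring,
        div_div_eq_mul_div, div_mul_cancel₀ _ h1x, mul_div_cancel_left₀ _ h2]
    refine Finset.sum_nbij' (i := fun w => (1 - w) / (1 + w)) (j := fun d => (1 - d) / (1 + d))
      ?_ ?_ ?_ ?_ ?_
    · intro w hw
      obtain ⟨hw0, hw1, hwm1⟩ := hmemA w hw
      obtain ⟨k0, k1, km1⟩ := hmap w hw0 hw1 hwm1
      simp only [hA, mem_erase, mem_univ, and_true]
      exact ⟨km1, k1, k0⟩
    · intro d hd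
      obtain ⟨hd0, hd1, hdm1⟩ := hmemA d hd
      obtain ⟨k0, k1, km1⟩ := hmap d hd0 hd1 hdm1
      simp only [hA, mem_erase, mem_univ, and_true]
      exact ⟨km1, k1, k0⟩
    · intro w hw
      obtain ⟨hw0, hw1, hwm1⟩ := hmemA w hw
      exact hkey w hw0 hwm1
    · intro d hd
      obtain ⟨hd0, hd1, hdm1⟩ := hmemA d hd
      exact hkey d hd0 hdm1
    · intro w hw
      obtain ⟨hw0, hw1, hwm1⟩ := hmemA w hw
      have h1w : (1 + w) ≠ 0 := fun hc => hwm1 (by linear_combination hc)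
      have e2 : χ w = χ (1 - ((1 - w) / (1 + w)) ^ 2) := by
        rw [show (1 : F) - ((1 - w) / (1 + w)) ^ 2 = (2 / (1 + w)) ^ 2 * w from by
          field_simp; ring, chi_sq_mul (div_ne_zero h2 h1w)]
      rw [e2]
  -- add back d = 0, 1, -1 (only d = 0 contributes)
  have hC5 : ∑ d ∈ A, χ (1 - d ^ 2) * MM (d ^ 2)
      = ∑ d : F, χ (1 - d ^ 2) * MM (d ^ 2) + χ (-1) := by
    rw [hA, Finset.sum_erase_eq_sub (a := (-1 : F)) (by
        simp only [mem_erase, mem_univ, and_true]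
        exact ⟨hm1ne1, hm1ne0⟩),
      Finset.sum_erase_eq_sub (a := (1 : F)) (by
        simp only [mem_erase, mem_univ, and_true]
        exact one_ne_zero),
      Finset.sum_erase_eq_sub (a := (0 : F)) (mem_univ 0)]
    have g0 : χ (1 - (0 : F) ^ 2) * MM ((0 : F) ^ 2) = -χ (-1) := by
      rw [show (1 : F) - 0 ^ 2 = 1 from by ring, show ((0 : F) ^ 2) = (0 : F) from by ring,
        MM_zero hF, map_one, one_mul]
    have g1 : χ (1 - (1 : F) ^ 2) * MM ((1 : F) ^ 2) = 0 := by
      rw [show (1 : F) - 1 ^ 2 = 0 from by ring, MulChar.map_zero, zero_mul]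
    have gm1 : χ (1 - (-1 : F) ^ 2) * MM ((-1 : F) ^ 2) = 0 := by
      rw [show (1 : F) - (-1) ^ 2 = 0 from by ring, MulChar.map_zero, zero_mul]
    rw [g0, g1, gm1]
    ring
  have hC6 : ∑ d : F, χ (1 - d ^ 2) * MM (d ^ 2)
      = (∑ t : F, ∑ u : F, χ (t * (t - 1) * (u * (u + 1) * (u + t)))) + 1 := by
    have e1 := sum_sq_index hF (fun s => χ (1 - s) * MM s)
    rw [e1]
    have e2 : ∀ s : F, (χ s + 1) * (χ (1 - s) * MM s)
        = χ s * (χ (1 - s) * MM s) + χ (1 - s) * MM s := by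
      intro s; ring
    rw [Finset.sum_congr rfl fun s _ => e2 s, Finset.sum_add_distrib, step_Bprime hF, sum_B hF]
  calc ∑ w : F, ∑ m : F, χ (w * (m * (m + 1) * (m + w ^ 2)))
      = ∑ w ∈ A, h w + (h (-1) + (h 1 + h 0)) := hsplit
    _ = (∑ t : F, ∑ u : F, χ (t * (t - 1) * (u * (u + 1) * (u + t))) + 1 + χ (-1))
        + (-1 + (-χ (-1) + 0)) := by
        rw [hinv, hC5, hC6, hw_one, hw_negone, hw_zero]
    _ = ∑ t : F, ∑ u : F, χ (t * (t - 1) * (u * (u + 1) * (u + t))) := by ring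

/-- Step D: `∑_n χ(n) φ(n)² = (q-1)·D`. -/
lemma step_D : ∑ n : F, χ n * (∑ x : F, χ (x * (x ^ 2 + n))) ^ 2
    = ((Fintype.card F : ℤ) - 1) * ∑ w : F, ∑ m : F, χ (w * (m * (m + 1) * (m + w ^ 2))) := by
  set D : ℤ := ∑ w : F, ∑ m : F, χ (w * (m * (m + 1) * (m + w ^ 2))) with hD
  have e1 : ∀ n : F, χ n * (∑ x : F, χ (x * (x ^ 2 + n))) ^ 2
      = ∑ x : F, ∑ y : F, χ (n * (x * (x ^ 2 + n)) * (y * (y ^ 2 + n))) := by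
    intro n
    rw [pow_two, Finset.sum_mul_sum, Finset.mul_sum]
    refine Finset.sum_congr rfl fun x _ => ?_
    rw [Finset.mul_sum]
    refine Finset.sum_congr rfl fun y _ => ?_
    rw [← map_mul, ← map_mul]
    congr 1
    ring
  rw [Finset.sum_congr rfl fun n _ => e1 n, Finset.sum_comm]
  have e2 : ∀ x : F, (∑ n : F, ∑ y : F, χ (n * (x * (x ^ 2 + n)) * (y * (y ^ 2 + n))))
      = if x = 0 then 0 else D := by
    intro x
    rcases eq_or_ne x 0 with h | h
    · subst h; simp
    · rw [if_neg h]
      rw [show (∑ n : F, ∑ y : F, χ (n * (x * (x ^ 2 + n)) * (y * (y ^ 2 + n))))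
          = ∑ m : F, ∑ y : F,
            χ ((x ^ 2 * m) * (x * (x ^ 2 + x ^ 2 * m)) * (y * (y ^ 2 + x ^ 2 * m))) from
        (Fintype.sum_equiv (Equiv.mulLeft₀ (x ^ 2) (pow_ne_zero 2 h)) _ _ fun m => rfl).symm]
      have e3 : ∀ m : F, ∑ y : F,
          χ ((x ^ 2 * m) * (x * (x ^ 2 + x ^ 2 * m)) * (y * (y ^ 2 + x ^ 2 * m)))
          = ∑ w : F, χ (w * (m * (m + 1) * (m + w ^ 2))) := by
        intro m
        refine (Fintype.sum_equiv (Equiv.mulLeft₀ x h) _ _ fun w => ?_).symm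
        simp only [Equiv.mulLeft₀_apply]
        rw [show (x ^ 2 * m) * (x * (x ^ 2 + x ^ 2 * m)) * ((x * w) * ((x * w) ^ 2 + x ^ 2 * m))
            = (x ^ 4) ^ 2 * (w * (m * (m + 1) * (m + w ^ 2))) from by ring,
          chi_sq_mul (pow_ne_zero 4 h)]
      rw [Finset.sum_congr rfl fun m _ => e3 m, hD]
      exact Finset.sum_comm
  rw [Finset.sum_congr rfl fun x _ => e2 x]
  have e4 : ∀ x : F, (if x = 0 then (0 : ℤ) else D) = D - (if x = 0 then D else 0) := by
    intro x; split_ifs <;> ring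
  rw [Finset.sum_congr rfl fun x _ => e4 x, Finset.sum_sub_distrib, Finset.sum_const,
    Finset.sum_ite_eq' univ (0 : F) fun _ => D]
  simp only [Finset.card_univ, mem_univ, if_true, nsmul_eq_mul]
  ring

/-- Step E: `∑_n φ(n)² = q(q-1)(1+χ(-1))`. -/
lemma step_E : ∑ n : F, (∑ x : F, χ (x * (x ^ 2 + n))) ^ 2
    = (Fintype.card F : ℤ) * ((Fintype.card F : ℤ) - 1) * (1 + χ (-1)) := by
  have h2 : (2 : F) ≠ 0 := Ring.two_ne_zero hF
  set q : ℤ := (Fintype.card F : ℤ) with hq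
  have e1 : ∀ n : F, (∑ x : F, χ (x * (x ^ 2 + n))) ^ 2
      = ∑ x : F, ∑ y : F, χ (x * y) * χ ((n + x ^ 2) * (n + y ^ 2)) := by
    intro n
    rw [pow_two, Finset.sum_mul_sum]
    refine Finset.sum_congr rfl fun x _ => Finset.sum_congr rfl fun y _ => ?_
    rw [← map_mul, ← map_mul]
    congr 1; ring
  rw [Finset.sum_congr rfl fun n _ => e1 n, Finset.sum_comm]
  have e2 : ∀ x : F, (∑ n : F, ∑ y : F, χ (x * y) * χ ((n + x ^ 2) * (n + y ^ 2)))
      = ∑ y : F, χ (x * y) * (if x ^ 2 = y ^ 2 then q - 1 else -1) := by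
    intro x
    rw [Finset.sum_comm]
    refine Finset.sum_congr rfl fun y _ => ?_
    rw [← Finset.mul_sum, sum_chi_mul_shift hF (x ^ 2) (y ^ 2)]
  rw [Finset.sum_congr rfl fun x _ => e2 x]
  have e3 : ∀ x y : F, χ (x * y) * (if x ^ 2 = y ^ 2 then q - 1 else -1)
      = -χ (x * y) + (if y ^ 2 = x ^ 2 then q * χ (x * y) else 0) := by
    intro x y
    rcases eq_or_ne (x ^ 2) (y ^ 2) with h | h
    · rw [if_pos h, if_pos h.symm]; ring
    · rw [if_neg h, if_neg (Ne.symm h)]; ring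
  rw [Finset.sum_congr rfl fun x _ =>
    (Finset.sum_congr rfl fun y _ => e3 x y).trans (Finset.sum_add_distrib),
    Finset.sum_add_distrib]
  have e4 : ∑ x : F, ∑ y : F, -χ (x * y) = 0 := by
    have : ∀ x : F, ∑ y : F, -χ (x * y) = -χ x * ∑ y : F, χ y := by
      intro x
      rw [Finset.mul_sum]
      exact Finset.sum_congr rfl fun y _ => by rw [map_mul]; ring
    rw [Finset.sum_congr rfl fun x _ => this x]
    rw [quadraticChar_sum_zero hF]
    simp
  have e5 : ∀ x : F, (∑ y : F, if y ^ 2 = x ^ 2 then q * χ (x * y) else 0)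
      = if x = 0 then 0 else q + q * χ (-1) := by
    intro x
    rcases eq_or_ne x 0 with h | h
    · subst h
      rw [if_pos rfl]
      refine Finset.sum_eq_zero fun y _ => ?_
      split_ifs with h'
      · rw [zero_mul, MulChar.map_zero, mul_zero]
      · rfl
    · rw [if_neg h, ← Finset.sum_filter]
      have hfil : univ.filter (fun y : F => y ^ 2 = x ^ 2) = {x, -x} := by
        ext y
        simp only [mem_filter, mem_univ, true_and, mem_insert, mem_singleton]
        exact sq_eq_sq_iff_eq_or_eq_neg
      have hxne : x ∉ ({-x} : Finset F) := by
        simp only [mem_singleton]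
        intro hc
        have : (2 : F) * x = 0 := by linear_combination hc
        exact h ((mul_eq_zero.mp this).resolve_left h2)
      rw [hfil, Finset.sum_insert hxne, Finset.sum_singleton,
        show x * x = x ^ 2 * 1 from by ring, chi_sq_mul h, map_one,
        show x * -x = x ^ 2 * (-1) from by ring, chi_sq_mul h]
      ring
  rw [Finset.sum_congr rfl fun x _ => e5 x, e4, zero_add]
  have e6 : ∀ x : F, (if x = 0 then (0 : ℤ) else q + q * χ (-1))
      = (q + q * χ (-1)) - (if x = 0 then q + q * χ (-1) else 0) := by
    intro x; split_ifs <;> ring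
  rw [Finset.sum_congr rfl fun x _ => e6 x, Finset.sum_sub_distrib, Finset.sum_const,
    Finset.sum_ite_eq' univ (0 : F) fun _ => q + q * χ (-1)]
  simp only [Finset.card_univ, mem_univ, if_true, nsmul_eq_mul, hq]
  ring

/-- Main bound over a finite field of odd characteristic: `|S| ≤ 2q`. -/
lemma main_bound : |∑ u : F, ∑ v : F, χ (u * v * (u + 1) * (v + 1) * (u * v - 1))|
    ≤ 2 * (Fintype.card F : ℤ) := by
  set q : ℤ := (Fintype.card F : ℤ) with hq
  have hq1 : 1 < q := by
    rw [hq]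
    exact_mod_cast Fintype.one_lt_card (α := F)
  set S : ℤ := ∑ u : F, ∑ v : F, χ (u * v * (u + 1) * (v + 1) * (u * v - 1)) with hS
  have key : (q - 1) * S = ∑ n : F, χ n * (∑ x : F, χ (x * (x ^ 2 + n))) ^ 2 := by
    rw [hS, step_A hF, ← step_C hF, step_D hF]
  have habs : |(q - 1) * S| ≤ 2 * q * (q - 1) := by
    rw [key]
    calc |∑ n : F, χ n * (∑ x : F, χ (x * (x ^ 2 + n))) ^ 2|
        ≤ ∑ n : F, |χ n * (∑ x : F, χ (x * (x ^ 2 + n))) ^ 2| := Finset.abs_sum_le_sum_abs _ _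
      _ ≤ ∑ n : F, (∑ x : F, χ (x * (x ^ 2 + n))) ^ 2 := by
          refine Finset.sum_le_sum fun n _ => ?_
          rw [abs_mul, abs_of_nonneg (sq_nonneg (∑ x : F, χ (x * (x ^ 2 + n))))]
          have h1 := chi_abs_le (F := F) n
          nlinarith [sq_nonneg (∑ x : F, χ (x * (x ^ 2 + n))), abs_nonneg (χ n)]
      _ = q * (q - 1) * (1 + χ (-1)) := step_E hF
      _ ≤ 2 * q * (q - 1) := by
          have hc : χ (-1 : F) ≤ 1 := le_of_abs_le (chi_abs_le (-1))
          have hqpos : (0 : ℤ) < q * (q - 1) :=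
            mul_pos (by linarith) (by linarith)
          nlinarith [hqpos, hc]
  have habs2 : (q - 1) * |S| ≤ (q - 1) * (2 * q) := by
    calc (q - 1) * |S| = |(q - 1) * S| := by
          rw [abs_mul, abs_of_nonneg (by linarith : (0:ℤ) ≤ q - 1)]
      _ ≤ 2 * q * (q - 1) := habs
      _ = (q - 1) * (2 * q) := by ring
  exact le_of_mul_le_mul_left habs2 (by linarith)

end charne

end GChiAux

/-- Lemma 14.1: for `p` an odd prime,
`|Σ_{u,v mod p} χ(u v (u+1)(v+1)(u v − 1))| ≤ 4p`. -/
theorem g_chi_chi_bound (p : ℕ) (hp : p.Prime) (hodd : Odd p) :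
    ‖∑ u ∈ Finset.range p, ∑ v ∈ Finset.range p,
        (jacobiSym ((u : ℤ) * v * ((u : ℤ) + 1) * ((v : ℤ) + 1) * ((u : ℤ) * v - 1)) p : ℂ)‖ ≤
      4 * p := by
  haveI : Fact p.Prime := ⟨hp⟩
  haveI : NeZero p := ⟨hp.pos.ne'⟩
  have hp2 : p ≠ 2 := by
    rintro rfl
    exact (by norm_num : ¬ Odd 2) hodd
  have hF : ringChar (ZMod p) ≠ 2 := by
    rw [ZMod.ringChar_zmod_n]
    exact hp2
  set χ := quadraticChar (ZMod p) with hχ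
  set S : ℤ := ∑ u : ZMod p, ∑ v : ZMod p, χ (u * v * (u + 1) * (v + 1) * (u * v - 1)) with hS
  have hrange : ∑ u ∈ Finset.range p, ∑ v ∈ Finset.range p,
      (jacobiSym ((u : ℤ) * v * ((u : ℤ) + 1) * ((v : ℤ) + 1) * ((u : ℤ) * v - 1)) p) = S := by
    rw [hS]
    refine Finset.sum_nbij' (i := fun n : ℕ => (n : ZMod p)) (j := fun x : ZMod p => x.val)
      (fun a _ => Finset.mem_univ _) (fun x _ => Finset.mem_range.mpr (ZMod.val_lt x))
      (fun a ha => ZMod.val_cast_of_lt (Finset.mem_range.mp ha))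
      (fun x _ => ZMod.natCast_rightInverse x) ?_
    intro u hu
    refine Finset.sum_nbij' (i := fun n : ℕ => (n : ZMod p)) (j := fun x : ZMod p => x.val)
      (fun a _ => Finset.mem_univ _) (fun x _ => Finset.mem_range.mpr (ZMod.val_lt x))
      (fun a ha => ZMod.val_cast_of_lt (Finset.mem_range.mp ha))
      (fun x _ => ZMod.natCast_rightInverse x) ?_
    intro v hv
    rw [← jacobiSym.legendreSym.to_jacobiSym]
    show quadraticChar (ZMod p)
        ((((u : ℤ) * v * ((u : ℤ) + 1) * ((v : ℤ) + 1) * ((u : ℤ) * v - 1) : ℤ) : ZMod p)) = _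
    congr 1
    push_cast
    ring
  have hcast : (∑ u ∈ Finset.range p, ∑ v ∈ Finset.range p,
      ((jacobiSym ((u : ℤ) * v * ((u : ℤ) + 1) * ((v : ℤ) + 1) * ((u : ℤ) * v - 1)) p : ℤ) : ℂ))
      = ((S : ℤ) : ℂ) := by
    rw [← hrange]
    push_cast
    rfl
  rw [hcast]
  have hbound := GChiAux.main_bound (F := ZMod p) hF
  rw [ZMod.card p] at hbound
  have hZ : |S| ≤ 4 * (p : ℤ) := by
    refine le_trans hbound ?_
    have : (0 : ℤ) ≤ (p : ℤ) := Int.ofNat_nonneg p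
    linarith
  rw [Complex.norm_intCast]
  have : |(S : ℝ)| = ((|S| : ℤ) : ℝ) := by
    rw [Int.cast_abs]
  rw [this]
  exact_mod_cast hZ
end

section
/- Let p be an odd prime and χ the Legendre symbol modulo p. Then g(χ, χ) · τ(χ) = Σ_{a mod p, a ≢ 0 (mod p)} χ(a) · S(a, a; p)², where g(χ, χ) = Σ_{u, v mod p} χ( u v (u + 1)(v + 1)(u v − 1) ), τ(χ) = Σ_{x mod p} χ(x) e_p(x) is the Gauss sum, and S(a, a; p) is the Kloosterman sum. -/
/-! ### Auxiliary machinery -/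

open Finset

section Aux

/-- additive character property of `ec` -/
lemma ec_add (c : ℕ) (m n : ℤ) : ec c (m + n) = ec c m * ec c n := by
  unfold ec
  rw [← Complex.exp_add]
  congr 1
  push_cast
  ring

lemma ec_mul_self (c : ℕ) (hc : (c : ℂ) ≠ 0) (k : ℤ) : ec c (c * k) = 1 := by
  unfold ec
  rw [show 2 * Real.pi * Complex.I * ((c : ℤ) * k : ℤ) / c = (k : ℂ) * (2 * Real.pi * Complex.I) by
    push_cast; field_simp]
  exact Complex.exp_int_mul_two_pi_mul_I k

variable (p : ℕ)

/-- `ec` as a function on `ZMod p`. -/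
noncomputable def ep (x : ZMod p) : ℂ := ec p (x.val : ℤ)

variable [NeZero p]

lemma ec_eq_ep (n : ℤ) : ec p n = ep p (n : ZMod p) := by
  have hc : (p : ℂ) ≠ 0 := by
    exact_mod_cast Nat.cast_ne_zero.mpr (NeZero.ne p)
  have h1 : ((((n : ZMod p)).val : ℤ)) = n % p := ZMod.val_intCast n
  have h2 : n = (p : ℤ) * (n / p) + n % p := (Int.mul_ediv_add_emod n p).symm
  rw [ep, h1]
  conv_lhs => rw [h2]
  rw [ec_add, ec_mul_self _ hc, one_mul]

lemma ep_add (x y : ZMod p) : ep p (x + y) = ep p x * ep p y := by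
  have e1 : ep p (x + y) = ec p (((x + y).val : ℤ)) := rfl
  have e2 : ep p x * ep p y = ec p ((x.val : ℤ) + (y.val : ℤ)) := (ec_add p _ _).symm
  rw [e1, e2, ec_eq_ep, ec_eq_ep]
  congr 1
  push_cast
  simp [ZMod.natCast_val, ZMod.cast_id]

lemma ep_zero : ep p (0 : ZMod p) = 1 := by
  rw [ep, ZMod.val_zero]
  unfold ec
  simp

end Aux

section Chi

variable (p : ℕ) [Fact p.Prime]

/-- The Legendre symbol as a `ℂ`-valued function on `ZMod p`. -/
noncomputable def qc (x : ZMod p) : ℂ := ((quadraticChar (ZMod p) x : ℤ) : ℂ)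

lemma qc_mul (x y : ZMod p) : qc p (x * y) = qc p x * qc p y := by
  unfold qc; rw [map_mul]; push_cast; ring

lemma qc_zero : qc p (0 : ZMod p) = 0 := by
  unfold qc; rw [quadraticChar_zero]; norm_num

lemma qc_sq {x : ZMod p} (hx : x ≠ 0) : qc p x * qc p x = 1 := by
  unfold qc
  have := quadraticChar_sq_one hx
  rw [pow_two] at this
  rw [← Int.cast_mul, this, Int.cast_one]

lemma jacobi_eq_qc (n : ℤ) : ((jacobiSym n p : ℤ) : ℂ) = qc p ((n : ZMod p)) := by
  rw [← jacobiSym.legendreSym.to_jacobiSym p n]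
  rfl

lemma qc_sum_zero (hodd : p ≠ 2) : ∑ a : ZMod p, qc p a = 0 := by
  have h : ringChar (ZMod p) ≠ 2 := by
    rw [ZMod.ringChar_zmod_n]; exact hodd
  unfold qc
  rw [← Int.cast_sum, quadraticChar_sum_zero h, Int.cast_zero]

lemma qc_shift_sum_zero (hodd : p ≠ 2) (c : ZMod p) : ∑ r : ZMod p, qc p (c + r) = 0 := by
  rw [Fintype.sum_equiv (Equiv.addLeft c) (fun r => qc p (c + r)) (qc p) (fun r => rfl)]
  exact qc_sum_zero p hodd

end Chi

section Count

variable (p : ℕ) [Fact p.Prime]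

lemma two_ne_zero_zmod (hodd : p ≠ 2) : (2 : ZMod p) ≠ 0 := by
  have : ((2 : ℕ) : ZMod p) ≠ 0 := by
    rw [Ne, ZMod.natCast_eq_zero_iff]
    intro h
    exact hodd ((Nat.prime_dvd_prime_iff_eq (Fact.out : p.Prime) Nat.prime_two).mp h)
  simpa using this

/-- number of `x ≠ 0` with `x + x⁻¹ = s` -/
lemma card_fiber (hodd : p ≠ 2) (s : ZMod p) :
    (((univ : Finset (ZMod p)).filter fun x => x ≠ 0 ∧ x + x⁻¹ = s).card : ℂ)
      = 1 + qc p (s ^ 2 - 4) := by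
  have h2 : (2 : ZMod p) ≠ 0 := two_ne_zero_zmod p hodd
  have h4 : (4 : ZMod p) ≠ 0 := by
    have := mul_ne_zero h2 h2
    rwa [show (2 : ZMod p) * 2 = 4 by norm_num] at this
  -- first: rewrite the filter condition as a quadratic
  have hset : ((univ : Finset (ZMod p)).filter fun x => x ≠ 0 ∧ x + x⁻¹ = s)
      = (univ : Finset (ZMod p)).filter fun x => (2 * x - s) ^ 2 = s ^ 2 - 4 := by
    apply Finset.filter_congr
    intro x _
    have key : ((2 * x - s) ^ 2 = s ^ 2 - 4) ↔ (x * x - s * x + 1 = 0) := by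
      constructor
      · intro h
        have h' : 4 * (x * x - s * x + 1) = 0 := by linear_combination h
        rcases mul_eq_zero.mp h' with h'' | h''
        · exact absurd h'' h4
        · exact h''
      · intro h
        linear_combination 4 * h
    simp only [key]
    constructor
    · rintro ⟨hx, hs⟩
      have : x * (x + x⁻¹) = x * s := by rw [hs]
      rw [mul_add, mul_inv_cancel₀ hx] at this
      linear_combination this
    · intro h
      have hx : x ≠ 0 := by
        intro h0
        rw [h0] at h
        simp at h
      refine ⟨hx, ?_⟩
      have hinv : x⁻¹ = s - x := by
        have hmul : x * (s - x) = 1 := by linear_combination -h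
        exact inv_eq_of_mul_eq_one_right hmul
      rw [hinv]; ring
  rw [hset]
  -- second: bijection 2x - s ↔ y with y ^ 2 = s ^ 2 - 4
  have hcard : ((univ : Finset (ZMod p)).filter fun x => (2 * x - s) ^ 2 = s ^ 2 - 4).card
      = ((univ : Finset (ZMod p)).filter fun y => y ^ 2 = s ^ 2 - 4).card := by
    apply Finset.card_nbij' (i := fun x => 2 * x - s) (j := fun y => (y + s) * 2⁻¹)
    · intro x hx
      simp only [Finset.mem_coe, Finset.mem_filter, Finset.mem_univ, true_and] at *
      exact hx
    · intro y hy
      simp only [Finset.mem_coe, Finset.mem_filter, Finset.mem_univ, true_and] at *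
      rw [show 2 * ((y + s) * 2⁻¹) - s = y by field_simp; ring]
      exact hy
    · intro x _
      field_simp
      ring
    · intro y _
      field_simp
      ring
  rw [hcard]
  -- third: quadraticChar_card_sqrts
  have h := quadraticChar_card_sqrts (by rw [ZMod.ringChar_zmod_n]; exact hodd) (s ^ 2 - 4)
  rw [show {x : ZMod p | x ^ 2 = s ^ 2 - 4}.toFinset
      = (univ : Finset (ZMod p)).filter fun y => y ^ 2 = s ^ 2 - 4 by
    ext y; simp] at h
  have h' : ((((univ : Finset (ZMod p)).filter fun y => y ^ 2 = s ^ 2 - 4).card : ℂ))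
      = ((quadraticChar (ZMod p) (s ^ 2 - 4) : ℤ) : ℂ) + 1 := by
    exact_mod_cast congrArg (fun z : ℤ => (z : ℂ)) h
  rw [h']
  unfold qc
  ring

/-- fiber summation lemma -/
lemma fiber_sum (hodd : p ≠ 2) (f : ZMod p → ℂ) :
    ∑ x ∈ (univ : Finset (ZMod p)).filter (fun x => x ≠ 0), f (x + x⁻¹)
      = ∑ s : ZMod p, (1 + qc p (s ^ 2 - 4)) * f s := by
  have step1 : ∑ x ∈ (univ : Finset (ZMod p)).filter (fun x => x ≠ 0), f (x + x⁻¹)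
      = ∑ x ∈ (univ : Finset (ZMod p)).filter (fun x => x ≠ 0),
          ∑ s : ZMod p, if x + x⁻¹ = s then f s else 0 := by
    refine Finset.sum_congr rfl fun x _ => ?_
    rw [Finset.sum_ite_eq (univ : Finset (ZMod p)) (x + x⁻¹) f]
    simp
  rw [step1, Finset.sum_comm]
  refine Finset.sum_congr rfl fun s _ => ?_
  rw [← Finset.sum_filter, Finset.filter_filter, Finset.sum_const, nsmul_eq_mul]
  rw [card_fiber p hodd s]

end Count

section Subst

variable (p : ℕ) [Fact p.Prime]

/-- Reindexing a sum via the Möbius map `u ↦ 2(u-1)/(u+1)`. -/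
lemma moebius_sum (hodd : p ≠ 2) (f g : ZMod p → ℂ)
    (hfg : ∀ u, u + 1 ≠ 0 → f u = g (2 * (u - 1) * (u + 1)⁻¹))
    (hf : f (-1) = 0) (hg : g 2 = 0) :
    ∑ u : ZMod p, f u = ∑ s : ZMod p, g s := by
  have h2 : (2 : ZMod p) ≠ 0 := two_ne_zero_zmod p hodd
  have h4 : (4 : ZMod p) ≠ 0 := by
    have := mul_ne_zero h2 h2
    rwa [show (2 : ZMod p) * 2 = 4 by norm_num] at this
  have hsplit1 : ∑ u : ZMod p, f u = ∑ u ∈ (univ : Finset (ZMod p)).erase (-1), f u := by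
    rw [← Finset.add_sum_erase (univ : Finset (ZMod p)) f (Finset.mem_univ (-1)), hf, zero_add]
  have hsplit2 : ∑ s : ZMod p, g s = ∑ s ∈ (univ : Finset (ZMod p)).erase 2, g s := by
    rw [← Finset.add_sum_erase (univ : Finset (ZMod p)) g (Finset.mem_univ 2), hg, zero_add]
  rw [hsplit1, hsplit2]
  apply Finset.sum_nbij' (i := fun u => 2 * (u - 1) * (u + 1)⁻¹)
    (j := fun s => (2 + s) * (2 - s)⁻¹)
  · intro u hu
    have hu1 : u + 1 ≠ 0 := by
      intro h; apply Finset.ne_of_mem_erase hu; linear_combination h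
    simp only [Finset.mem_erase, Finset.mem_univ, and_true]
    intro h
    have h' : (2 : ZMod p) * (u - 1) = 2 * (u + 1) := by
      have := congrArg (· * (u + 1)) h
      rw [mul_assoc, inv_mul_cancel₀ hu1, mul_one] at this
      linear_combination this
    exact h4 (by linear_combination -h')
  · intro s hs
    have hs2 : (2 : ZMod p) - s ≠ 0 := by
      intro h; apply Finset.ne_of_mem_erase hs; linear_combination -h
    simp only [Finset.mem_erase, Finset.mem_univ, and_true]
    intro h
    have h' : (2 : ZMod p) + s = -(2 - s) := by
      have := congrArg (· * (2 - s)) h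
      rw [mul_assoc, inv_mul_cancel₀ hs2, mul_one] at this
      linear_combination this
    exact h4 (by linear_combination h')
  · intro u hu
    have hu1 : u + 1 ≠ 0 := by
      intro h; apply Finset.ne_of_mem_erase hu; linear_combination h
    have key1 : (2 : ZMod p) + 2 * (u - 1) * (u + 1)⁻¹ = 4 * u * (u + 1)⁻¹ := by
      field_simp
      try ring
    have key2 : (2 : ZMod p) - 2 * (u - 1) * (u + 1)⁻¹ = 4 * (u + 1)⁻¹ := by
      field_simp
      try ring
    rw [key1, key2]
    have hne : (4 : ZMod p) * (u + 1)⁻¹ ≠ 0 := mul_ne_zero h4 (inv_ne_zero hu1)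
    field_simp
    try ring
  · intro s hs
    have hs2 : (2 : ZMod p) - s ≠ 0 := by
      intro h; apply Finset.ne_of_mem_erase hs; linear_combination -h
    have key1 : (2 + s) * (2 - s)⁻¹ - 1 = 2 * s * (2 - s)⁻¹ := by
      field_simp
      try ring
    have key2 : (2 + s) * (2 - s)⁻¹ + 1 = 4 * (2 - s)⁻¹ := by
      field_simp
      try ring
    rw [key1, key2]
    field_simp
    try ring
  · intro u hu
    exact hfg u (by
      intro h; apply Finset.ne_of_mem_erase hu; linear_combination h)

end Subst


section Conv

variable (p : ℕ) [NeZero p]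

lemma sum_range_zmod (f : ZMod p → ℂ) :
    ∑ x ∈ Finset.range p, f ((x : ℕ) : ZMod p) = ∑ x : ZMod p, f x := by
  apply Finset.sum_nbij' (i := fun x : ℕ => ((x : ℕ) : ZMod p)) (j := fun x : ZMod p => x.val)
  · intro a _; exact Finset.mem_univ _
  · intro a _; exact Finset.mem_range.mpr (ZMod.val_lt a)
  · intro a ha; exact ZMod.val_cast_of_lt (Finset.mem_range.mp ha)
  · intro a _; exact ZMod.natCast_rightInverse a
  · intro a _; rfl

end Conv

section Key

variable (p : ℕ) [Fact p.Prime]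

lemma qc_inv {x : ZMod p} (hx : x ≠ 0) : qc p x⁻¹ = qc p x := by
  conv_lhs => rw [show x⁻¹ = x * (x⁻¹ * x⁻¹) by field_simp]
  rw [qc_mul, qc_mul, qc_sq p (inv_ne_zero hx), mul_one]

lemma key_identity (hodd : p ≠ 2) (u v : ZMod p) (hu : u + 1 ≠ 0) (hv : v + 1 ≠ 0) :
    qc p ((2 * (u - 1) * (u + 1)⁻¹ + 2 * (v - 1) * (v + 1)⁻¹)
        * ((2 * (u - 1) * (u + 1)⁻¹) ^ 2 - 4) * ((2 * (v - 1) * (v + 1)⁻¹) ^ 2 - 4))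
      = qc p (u * v * (u + 1) * (v + 1) * (u * v - 1)) := by
  have h2 : (2 : ZMod p) ≠ 0 := two_ne_zero_zmod p hodd
  have h32 : (32 : ZMod p) ≠ 0 := by
    have h5 : (2 : ZMod p) ^ 5 ≠ 0 := pow_ne_zero _ h2
    rwa [show ((2 : ZMod p)) ^ 5 = 32 by norm_num] at h5
  have hc : (32 : ZMod p) * ((u + 1)⁻¹) ^ 2 * ((v + 1)⁻¹) ^ 2 ≠ 0 :=
    mul_ne_zero (mul_ne_zero h32 (pow_ne_zero _ (inv_ne_zero hu)))
      (pow_ne_zero _ (inv_ne_zero hv))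
  have heq : (2 * (u - 1) * (u + 1)⁻¹ + 2 * (v - 1) * (v + 1)⁻¹)
        * ((2 * (u - 1) * (u + 1)⁻¹) ^ 2 - 4) * ((2 * (v - 1) * (v + 1)⁻¹) ^ 2 - 4)
      = (u * v * (u + 1) * (v + 1) * (u * v - 1))
        * (((32 : ZMod p) * ((u + 1)⁻¹) ^ 2 * ((v + 1)⁻¹) ^ 2)
          * ((32 : ZMod p) * ((u + 1)⁻¹) ^ 2 * ((v + 1)⁻¹) ^ 2)) := by
    field_simp
    ring
  have hcc : qc p (((32 : ZMod p) * ((u + 1)⁻¹) ^ 2 * ((v + 1)⁻¹) ^ 2)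
      * ((32 : ZMod p) * ((u + 1)⁻¹) ^ 2 * ((v + 1)⁻¹) ^ 2)) = 1 := by
    rw [qc_mul]; exact qc_sq p hc
  rw [heq, qc_mul, hcc, mul_one]

lemma A_eq_B (hodd : p ≠ 2) :
    ∑ u : ZMod p, ∑ v : ZMod p, qc p (u * v * (u + 1) * (v + 1) * (u * v - 1))
      = ∑ s : ZMod p, ∑ t : ZMod p, qc p ((s + t) * (s ^ 2 - 4) * (t ^ 2 - 4)) := by
  apply moebius_sum p hodd
    (f := fun u => ∑ v : ZMod p, qc p (u * v * (u + 1) * (v + 1) * (u * v - 1)))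
    (g := fun s => ∑ t : ZMod p, qc p ((s + t) * (s ^ 2 - 4) * (t ^ 2 - 4)))
  · intro u hu
    apply moebius_sum p hodd
      (f := fun v => qc p (u * v * (u + 1) * (v + 1) * (u * v - 1)))
      (g := fun t => qc p ((2 * (u - 1) * (u + 1)⁻¹ + t)
        * ((2 * (u - 1) * (u + 1)⁻¹) ^ 2 - 4) * (t ^ 2 - 4)))
    · intro v hv
      exact (key_identity p hodd u v hu hv).symm
    · rw [show (u * (-1) * (u + 1) * ((-1 : ZMod p) + 1) * (u * (-1) - 1)) = 0 by ring, qc_zero]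
    · rw [show ((2 * (u - 1) * (u + 1)⁻¹ + 2) * ((2 * (u - 1) * (u + 1)⁻¹) ^ 2 - 4)
        * ((2 : ZMod p) ^ 2 - 4)) = 0 by ring, qc_zero]
  · refine Finset.sum_eq_zero fun v _ => ?_
    rw [show ((-1 : ZMod p) * v * ((-1 : ZMod p) + 1) * (v + 1) * ((-1) * v - 1)) = 0 by ring,
      qc_zero]
  · refine Finset.sum_eq_zero fun t _ => ?_
    rw [show (((2 : ZMod p) + t) * ((2 : ZMod p) ^ 2 - 4) * (t ^ 2 - 4)) = 0 by ring, qc_zero]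

lemma qc_shift_sum_zero_right (hodd : p ≠ 2) (c : ZMod p) : ∑ r : ZMod p, qc p (r + c) = 0 := by
  rw [Fintype.sum_equiv (Equiv.addRight c) (fun r => qc p (r + c)) (qc p) (fun r => rfl)]
  exact qc_sum_zero p hodd

lemma Q_eq_B (hodd : p ≠ 2) :
    ∑ x ∈ (univ : Finset (ZMod p)).filter (fun x => x ≠ 0),
      ∑ y ∈ (univ : Finset (ZMod p)).filter (fun y => y ≠ 0),
        qc p ((x + x⁻¹) + (y + y⁻¹))
      = ∑ s : ZMod p, ∑ t : ZMod p, qc p ((s + t) * (s ^ 2 - 4) * (t ^ 2 - 4)) := by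
  rw [fiber_sum p hodd (fun s => ∑ y ∈ (univ : Finset (ZMod p)).filter (fun y => y ≠ 0),
    qc p (s + (y + y⁻¹)))]
  have hinner : ∀ s : ZMod p,
      ∑ y ∈ (univ : Finset (ZMod p)).filter (fun y => y ≠ 0), qc p (s + (y + y⁻¹))
        = ∑ t : ZMod p, (1 + qc p (t ^ 2 - 4)) * qc p (s + t) :=
    fun s => fiber_sum p hodd (fun t => qc p (s + t))
  calc ∑ s : ZMod p, (1 + qc p (s ^ 2 - 4)) *
          ∑ y ∈ (univ : Finset (ZMod p)).filter (fun y => y ≠ 0), qc p (s + (y + y⁻¹))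
      = ∑ s : ZMod p, ∑ t : ZMod p, ((1 + qc p (s ^ 2 - 4)) *
          ((1 + qc p (t ^ 2 - 4)) * qc p (s + t))) := by
        refine Finset.sum_congr rfl fun s _ => ?_
        rw [hinner s, Finset.mul_sum]
    _ = ∑ s : ZMod p, ∑ t : ZMod p, (qc p (s + t) + qc p (s ^ 2 - 4) * qc p (s + t)
          + qc p (t ^ 2 - 4) * qc p (s + t)
          + qc p (s ^ 2 - 4) * (qc p (t ^ 2 - 4) * qc p (s + t))) := by
        refine Finset.sum_congr rfl fun s _ => Finset.sum_congr rfl fun t _ => ?_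
        ring
    _ = ∑ s : ZMod p, ∑ t : ZMod p, qc p ((s + t) * (s ^ 2 - 4) * (t ^ 2 - 4)) := by
        have e1 : ∑ s : ZMod p, ∑ t : ZMod p, (qc p (s + t) + qc p (s ^ 2 - 4) * qc p (s + t)
            + qc p (t ^ 2 - 4) * qc p (s + t)
            + qc p (s ^ 2 - 4) * (qc p (t ^ 2 - 4) * qc p (s + t)))
          = (∑ s : ZMod p, ∑ t : ZMod p, qc p (s + t))
            + (∑ s : ZMod p, ∑ t : ZMod p, qc p (s ^ 2 - 4) * qc p (s + t))
            + (∑ s : ZMod p, ∑ t : ZMod p, qc p (t ^ 2 - 4) * qc p (s + t))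
            + (∑ s : ZMod p, ∑ t : ZMod p,
                qc p (s ^ 2 - 4) * (qc p (t ^ 2 - 4) * qc p (s + t))) := by
          simp [Finset.sum_add_distrib]
        rw [e1]
        have z1 : (∑ s : ZMod p, ∑ t : ZMod p, qc p (s + t)) = 0 := by
          refine Finset.sum_eq_zero fun s _ => qc_shift_sum_zero p hodd s
        have z2 : (∑ s : ZMod p, ∑ t : ZMod p, qc p (s ^ 2 - 4) * qc p (s + t)) = 0 := by
          refine Finset.sum_eq_zero fun s _ => ?_
          rw [← Finset.mul_sum, qc_shift_sum_zero p hodd s, mul_zero]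
        have z3 : (∑ s : ZMod p, ∑ t : ZMod p, qc p (t ^ 2 - 4) * qc p (s + t)) = 0 := by
          rw [Finset.sum_comm]
          refine Finset.sum_eq_zero fun t _ => ?_
          rw [← Finset.mul_sum, qc_shift_sum_zero_right p hodd t, mul_zero]
        have z4 : (∑ s : ZMod p, ∑ t : ZMod p,
            qc p (s ^ 2 - 4) * (qc p (t ^ 2 - 4) * qc p (s + t)))
          = ∑ s : ZMod p, ∑ t : ZMod p, qc p ((s + t) * (s ^ 2 - 4) * (t ^ 2 - 4)) := by
          refine Finset.sum_congr rfl fun s _ => Finset.sum_congr rfl fun t _ => ?_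
          rw [qc_mul, qc_mul]
          ring
        rw [z1, z2, z3, z4]
        ring

/-- Gauss sum twisting. -/
lemma twist (hodd : p ≠ 2) (t : ZMod p) :
    ∑ a : ZMod p, qc p a * ep p (a * t)
      = qc p t * ∑ a : ZMod p, qc p a * ep p a := by
  by_cases ht : t = 0
  · subst ht
    rw [qc_zero, zero_mul]
    calc ∑ a : ZMod p, qc p a * ep p (a * 0)
        = ∑ a : ZMod p, qc p a := by
          refine Finset.sum_congr rfl fun a _ => ?_
          rw [mul_zero, ep_zero, mul_one]
      _ = 0 := qc_sum_zero p hodd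
  · rw [Fintype.sum_equiv (Equiv.mulRight₀ t ht)
      (fun a => qc p a * ep p (a * t)) (fun b => qc p (b * t⁻¹) * ep p b)
      (fun a => by
        show qc p a * ep p (a * t) = qc p ((a * t) * t⁻¹) * ep p (a * t)
        rw [mul_assoc, mul_inv_cancel₀ ht, mul_one])]
    calc ∑ b : ZMod p, qc p (b * t⁻¹) * ep p b
        = ∑ b : ZMod p, qc p t * (qc p b * ep p b) := by
          refine Finset.sum_congr rfl fun b _ => ?_
          rw [qc_mul, qc_inv p ht]
          ring
      _ = qc p t * ∑ a : ZMod p, qc p a * ep p a := by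
          rw [← Finset.mul_sum]

/-- Kloosterman sums in `ZMod p` form. -/
lemma kloos_eq (m n : ℤ) :
    kloos m n p = ∑ x ∈ (univ : Finset (ZMod p)).filter (fun x => x ≠ 0),
      ep p ((m : ZMod p) * x + (n : ZMod p) * x⁻¹) := by
  have hterm : ∀ a d : ℕ, (if (a * d) % p = 1 % p then ec p ((a : ℤ) * m + (d : ℤ) * n) else 0)
      = (if ((a : ZMod p)) * ((d : ZMod p)) = 1
          then ep p ((m : ZMod p) * ((a : ZMod p)) + (n : ZMod p) * ((d : ZMod p))) else 0) := by
    intro a d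
    have hcond : ((a * d) % p = 1 % p) ↔ (((a : ZMod p)) * ((d : ZMod p)) = 1) := by
      rw [← ZMod.natCast_eq_natCast_iff']
      push_cast
      rfl
    have hec : ec p ((a : ℤ) * m + (d : ℤ) * n)
        = ep p ((m : ZMod p) * ((a : ZMod p)) + (n : ZMod p) * ((d : ZMod p))) := by
      rw [ec_eq_ep]
      congr 1
      push_cast
      ring
    rw [hec]
    simp only [hcond]
  calc kloos m n p
      = ∑ a ∈ Finset.range p, ∑ d ∈ Finset.range p,
          (if ((a : ZMod p)) * ((d : ZMod p)) = 1
            then ep p ((m : ZMod p) * ((a : ZMod p)) + (n : ZMod p) * ((d : ZMod p))) else 0) := by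
        unfold kloos
        exact Finset.sum_congr rfl fun a _ => Finset.sum_congr rfl fun d _ => hterm a d
    _ = ∑ a ∈ Finset.range p, ∑ y : ZMod p,
          (if ((a : ZMod p)) * y = 1
            then ep p ((m : ZMod p) * ((a : ZMod p)) + (n : ZMod p) * y) else 0) := by
        refine Finset.sum_congr rfl fun a _ => ?_
        exact sum_range_zmod p (fun y => if ((a : ZMod p)) * y = 1
          then ep p ((m : ZMod p) * ((a : ZMod p)) + (n : ZMod p) * y) else 0)
    _ = ∑ x : ZMod p, ∑ y : ZMod p,
          (if x * y = 1 then ep p ((m : ZMod p) * x + (n : ZMod p) * y) else 0) := by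
        exact sum_range_zmod p (fun x => ∑ y : ZMod p,
          if x * y = 1 then ep p ((m : ZMod p) * x + (n : ZMod p) * y) else 0)
    _ = ∑ x : ZMod p, (if x ≠ 0 then ep p ((m : ZMod p) * x + (n : ZMod p) * x⁻¹) else 0) := by
        refine Finset.sum_congr rfl fun x _ => ?_
        by_cases hx : x = 0
        · subst hx
          simp
        · have hcond : ∀ y : ZMod p, (x * y = 1) ↔ (y = x⁻¹) := fun y =>
            ⟨fun h => (inv_eq_of_mul_eq_one_right h).symm,
             fun h => by rw [h]; exact mul_inv_cancel₀ hx⟩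
          simp only [hcond]
          rw [Finset.sum_ite_eq' Finset.univ x⁻¹
            (fun y => ep p ((m : ZMod p) * x + (n : ZMod p) * y))]
          simp [hx]
    _ = ∑ x ∈ (univ : Finset (ZMod p)).filter (fun x => x ≠ 0),
          ep p ((m : ZMod p) * x + (n : ZMod p) * x⁻¹) := by
        rw [Finset.sum_filter]

end Key

/-- equation (14.8): for `p` an odd prime,
`g(χ, χ) τ(χ) = Σ_{a mod p, a ≢ 0} χ(a) S(a, a; p)²`. -/
theorem g_chi_chi_times_gauss (p : ℕ) (hp : p.Prime) (hodd : Odd p) :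
    (∑ u ∈ Finset.range p, ∑ v ∈ Finset.range p,
        (jacobiSym ((u : ℤ) * v * ((u : ℤ) + 1) * ((v : ℤ) + 1) * ((u : ℤ) * v - 1)) p : ℂ)) *
        gaussτ p =
      ∑ a ∈ Finset.Ico 1 p, (jacobiSym (a : ℤ) p : ℂ) * kloos (a : ℤ) (a : ℤ) p ^ 2 := by
  haveI : Fact p.Prime := ⟨hp⟩
  haveI : NeZero p := ⟨hp.ne_zero⟩
  have hp2 : p ≠ 2 := by
    rintro rfl
    exact (Nat.not_odd_iff_even.mpr even_two) hodd
  -- the Gauss sum in `ZMod p` form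
  have hτ : gaussτ p = ∑ a : ZMod p, qc p a * ep p a := by
    unfold gaussτ
    calc ∑ x ∈ Finset.range p, (jacobiSym (x : ℤ) p : ℂ) * ec p (x : ℤ)
        = ∑ x ∈ Finset.range p, qc p ((x : ZMod p)) * ep p ((x : ZMod p)) := by
          refine Finset.sum_congr rfl fun x _ => ?_
          rw [jacobi_eq_qc, ec_eq_ep]
          norm_cast
      _ = ∑ a : ZMod p, qc p a * ep p a := sum_range_zmod p (fun a => qc p a * ep p a)
  -- the `g(χ,χ)` sum in `ZMod p` form
  have hA : (∑ u ∈ Finset.range p, ∑ v ∈ Finset.range p,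
        (jacobiSym ((u : ℤ) * v * ((u : ℤ) + 1) * ((v : ℤ) + 1) * ((u : ℤ) * v - 1)) p : ℂ))
      = ∑ u : ZMod p, ∑ v : ZMod p, qc p (u * v * (u + 1) * (v + 1) * (u * v - 1)) := by
    calc (∑ u ∈ Finset.range p, ∑ v ∈ Finset.range p,
          (jacobiSym ((u : ℤ) * v * ((u : ℤ) + 1) * ((v : ℤ) + 1) * ((u : ℤ) * v - 1)) p : ℂ))
        = ∑ u ∈ Finset.range p, ∑ v ∈ Finset.range p,
            qc p (((u : ZMod p)) * ((v : ZMod p)) * (((u : ZMod p)) + 1) * (((v : ZMod p)) + 1)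
              * (((u : ZMod p)) * ((v : ZMod p)) - 1)) := by
          refine Finset.sum_congr rfl fun u _ => Finset.sum_congr rfl fun v _ => ?_
          rw [jacobi_eq_qc]
          congr 1
          push_cast
          ring
      _ = ∑ u ∈ Finset.range p, ∑ v : ZMod p,
            qc p (((u : ZMod p)) * v * (((u : ZMod p)) + 1) * (v + 1)
              * (((u : ZMod p)) * v - 1)) := by
          refine Finset.sum_congr rfl fun u _ => ?_
          exact sum_range_zmod p (fun y => qc p (((u : ZMod p)) * y * (((u : ZMod p)) + 1)
            * (y + 1) * (((u : ZMod p)) * y - 1)))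
      _ = ∑ u : ZMod p, ∑ v : ZMod p, qc p (u * v * (u + 1) * (v + 1) * (u * v - 1)) :=
          sum_range_zmod p (fun x => ∑ v : ZMod p,
            qc p (x * v * (x + 1) * (v + 1) * (x * v - 1)))
  -- the right-hand side in `ZMod p` form
  have hK : ∀ a : ℕ, (jacobiSym (a : ℤ) p : ℂ) * kloos (a : ℤ) (a : ℤ) p ^ 2
      = qc p ((a : ZMod p)) * (∑ x ∈ (univ : Finset (ZMod p)).filter (fun x => x ≠ 0),
          ep p ((a : ZMod p) * x + (a : ZMod p) * x⁻¹)) ^ 2 := by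
    intro a
    rw [jacobi_eq_qc, kloos_eq p]
    push_cast
    ring
  have hRHS : (∑ a ∈ Finset.Ico 1 p, (jacobiSym (a : ℤ) p : ℂ) * kloos (a : ℤ) (a : ℤ) p ^ 2)
      = ∑ α : ZMod p, qc p α * (∑ x ∈ (univ : Finset (ZMod p)).filter (fun x => x ≠ 0),
          ep p (α * x + α * x⁻¹)) ^ 2 := by
    have h0 : (∑ a ∈ Finset.range p, (jacobiSym (a : ℤ) p : ℂ) * kloos (a : ℤ) (a : ℤ) p ^ 2)
        = ∑ a ∈ Finset.Ico 1 p, (jacobiSym (a : ℤ) p : ℂ) * kloos (a : ℤ) (a : ℤ) p ^ 2 := by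
      rw [Finset.range_eq_Ico, Finset.sum_eq_sum_Ico_succ_bot hp.pos]
      simp [jacobiSym.zero_left hp.one_lt]
    rw [← h0]
    calc ∑ a ∈ Finset.range p, (jacobiSym (a : ℤ) p : ℂ) * kloos (a : ℤ) (a : ℤ) p ^ 2
        = ∑ a ∈ Finset.range p, qc p ((a : ZMod p))
            * (∑ x ∈ (univ : Finset (ZMod p)).filter (fun x => x ≠ 0),
                ep p ((a : ZMod p) * x + (a : ZMod p) * x⁻¹)) ^ 2 :=
          Finset.sum_congr rfl fun a _ => hK a
      _ = ∑ α : ZMod p, qc p α * (∑ x ∈ (univ : Finset (ZMod p)).filter (fun x => x ≠ 0),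
            ep p (α * x + α * x⁻¹)) ^ 2 :=
          sum_range_zmod p (fun α => qc p α
            * (∑ x ∈ (univ : Finset (ZMod p)).filter (fun x => x ≠ 0),
                ep p (α * x + α * x⁻¹)) ^ 2)
  -- expand the square and apply the Gauss-sum twist
  have hsq : ∀ α : ZMod p, (∑ x ∈ (univ : Finset (ZMod p)).filter (fun x => x ≠ 0),
        ep p (α * x + α * x⁻¹)) ^ 2
      = ∑ x ∈ (univ : Finset (ZMod p)).filter (fun x => x ≠ 0),
          ∑ y ∈ (univ : Finset (ZMod p)).filter (fun y => y ≠ 0),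
            ep p (α * ((x + x⁻¹) + (y + y⁻¹))) := by
    intro α
    rw [pow_two, Finset.sum_mul_sum]
    refine Finset.sum_congr rfl fun x _ => Finset.sum_congr rfl fun y _ => ?_
    rw [← ep_add]
    congr 1
    ring
  have hmain : (∑ α : ZMod p, qc p α
        * (∑ x ∈ (univ : Finset (ZMod p)).filter (fun x => x ≠ 0),
            ep p (α * x + α * x⁻¹)) ^ 2)
      = (∑ x ∈ (univ : Finset (ZMod p)).filter (fun x => x ≠ 0),
          ∑ y ∈ (univ : Finset (ZMod p)).filter (fun y => y ≠ 0),
            qc p ((x + x⁻¹) + (y + y⁻¹))) * (∑ a : ZMod p, qc p a * ep p a) := by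
    calc (∑ α : ZMod p, qc p α
          * (∑ x ∈ (univ : Finset (ZMod p)).filter (fun x => x ≠ 0),
              ep p (α * x + α * x⁻¹)) ^ 2)
        = ∑ α : ZMod p, ∑ x ∈ (univ : Finset (ZMod p)).filter (fun x => x ≠ 0),
            ∑ y ∈ (univ : Finset (ZMod p)).filter (fun y => y ≠ 0),
              qc p α * ep p (α * ((x + x⁻¹) + (y + y⁻¹))) := by
          refine Finset.sum_congr rfl fun α _ => ?_
          rw [hsq α, Finset.mul_sum]
          exact Finset.sum_congr rfl fun x _ => by rw [Finset.mul_sum]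
      _ = ∑ x ∈ (univ : Finset (ZMod p)).filter (fun x => x ≠ 0),
            ∑ y ∈ (univ : Finset (ZMod p)).filter (fun y => y ≠ 0),
              ∑ α : ZMod p, qc p α * ep p (α * ((x + x⁻¹) + (y + y⁻¹))) := by
          rw [Finset.sum_comm]
          exact Finset.sum_congr rfl fun x _ => Finset.sum_comm
      _ = ∑ x ∈ (univ : Finset (ZMod p)).filter (fun x => x ≠ 0),
            ∑ y ∈ (univ : Finset (ZMod p)).filter (fun y => y ≠ 0),
              qc p ((x + x⁻¹) + (y + y⁻¹)) * (∑ a : ZMod p, qc p a * ep p a) :=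
          Finset.sum_congr rfl fun x _ => Finset.sum_congr rfl fun y _ => twist p hp2 _
      _ = (∑ x ∈ (univ : Finset (ZMod p)).filter (fun x => x ≠ 0),
            ∑ y ∈ (univ : Finset (ZMod p)).filter (fun y => y ≠ 0),
              qc p ((x + x⁻¹) + (y + y⁻¹))) * (∑ a : ZMod p, qc p a * ep p a) := by
          rw [Finset.sum_mul]
          exact Finset.sum_congr rfl fun x _ => by rw [Finset.sum_mul]
  rw [hA, hτ, hRHS, hmain, A_eq_B p hp2, ← Q_eq_B p hp2]
end

section
/- Let p be an odd prime and a an integer with a ≢ 0 (mod p). Let ν(a) be the number of quadruples (d₁, d₂, d₃, d₄) of residues modulo p, all coprime to p, satisfying a(d₁ + d₂) ≡ d₃ + d₄ (mod p) and a(d₁^{−1} + d₂^{−1}) ≡ d₃^{−1} + d₄^{−1} (mod p), where d^{−1} denotes the multiplicative inverse modulo p. Then ν(a) = 2(p − 1)(p − 3) + p(p − 1) if a² ≡ 1 (mod p), and ν(a) = 2(p − 1)(p − 3) otherwise. -/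
open Finset

lemma hyp (p : ℕ) [Fact p.Prime] (c : ZMod p) :
    (Finset.univ.filter fun z : ZMod p × ZMod p => z.1 * z.2 = c).card
      = if c = 0 then 2 * p - 1 else p - 1 := by
  have hp : p.Prime := Fact.out
  have hcard : Fintype.card (ZMod p) = p := ZMod.card p
  split_ifs with hc
  · subst hc
    have heq : (Finset.univ.filter fun z : ZMod p × ZMod p => z.1 * z.2 = 0)
        = (Finset.univ.filter fun z : ZMod p × ZMod p => z.1 = 0)
          ∪ (Finset.univ.filter fun z : ZMod p × ZMod p => z.2 = 0) := by
      ext z; simp [mul_eq_zero]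
    have h1 : (Finset.univ.filter fun z : ZMod p × ZMod p => z.1 = 0)
        = {(0 : ZMod p)} ×ˢ Finset.univ := by ext z; simp [Prod.ext_iff, eq_comm]
    have h2 : (Finset.univ.filter fun z : ZMod p × ZMod p => z.2 = 0)
        = Finset.univ ×ˢ {(0 : ZMod p)} := by ext z; simp [Prod.ext_iff, eq_comm]
    have h3 : (Finset.univ.filter fun z : ZMod p × ZMod p => z.1 = 0)
        ∩ (Finset.univ.filter fun z : ZMod p × ZMod p => z.2 = 0) = {((0:ZMod p),(0:ZMod p))} := by
      ext z; simp [Prod.ext_iff]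
    have hu := Finset.card_union_add_card_inter
      (Finset.univ.filter fun z : ZMod p × ZMod p => z.1 = 0)
      (Finset.univ.filter fun z : ZMod p × ZMod p => z.2 = 0)
    rw [h1, h2] at heq
    rw [heq]
    rw [h3, h1, h2, Finset.card_singleton, Finset.card_product, Finset.card_product,
      Finset.card_singleton, Finset.card_univ, hcard] at hu
    have hple : 1 ≤ p := hp.one_lt.le.trans' (by norm_num)
    omega
  · have key : (Finset.univ.filter fun z : ZMod p × ZMod p => z.1 * z.2 = c).card
        = (Finset.univ.filter fun x : ZMod p => x ≠ 0).card := by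
      apply Finset.card_nbij' (i := fun z => z.1) (j := fun x => (x, c * x⁻¹))
      · intro z hz
        simp only [mem_coe, mem_filter, mem_univ, true_and] at hz ⊢
        intro h; rw [h] at hz; simp at hz; exact hc hz.symm
      · intro x hx
        simp only [mem_coe, mem_filter, mem_univ, true_and] at hx ⊢
        field_simp
      · intro z hz
        simp only [mem_coe, mem_filter, mem_univ, true_and] at hz
        have h1 : z.1 ≠ 0 := by intro h; rw [h] at hz; simp at hz; exact hc hz.symm
        have h4 : c * z.1⁻¹ = z.2 := by rw [← hz]; field_simp
        ext <;> simp [h4]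
      · intro x hx; rfl
    rw [key, Finset.filter_ne', Finset.card_erase_of_mem (Finset.mem_univ _)]
    simp [hcard]

lemma conic (p : ℕ) [Fact p.Prime] (s A : ZMod p) (hs : s ≠ 0) (h2 : (2 : ZMod p) ≠ 0) :
    (Finset.univ.filter fun z : ZMod p × ZMod p =>
        z.1 * (s - z.1) = z.2 * (A * s - z.2)).card
      = if A ^ 2 = 1 then 2 * p - 1 else p - 1 := by
  have key : (Finset.univ.filter fun z : ZMod p × ZMod p =>
        z.1 * (s - z.1) = z.2 * (A * s - z.2)).card
      = (Finset.univ.filter fun z : ZMod p × ZMod p =>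
          z.1 * z.2 = (A ^ 2 - 1) * s ^ 2).card := by
    apply Finset.card_nbij'
      (i := fun z => (2 * z.2 - A * s - 2 * z.1 + s, 2 * z.2 - A * s + 2 * z.1 - s))
      (j := fun w => (((w.2 - w.1) / 2 + s) / 2, ((w.1 + w.2) / 2 + A * s) / 2))
    · intro z hz
      simp only [mem_coe, mem_filter, mem_univ, true_and] at hz ⊢
      linear_combination (4 : ZMod p) * hz
    · intro w hw
      simp only [mem_coe, mem_filter, mem_univ, true_and] at hw ⊢
      field_simp
      linear_combination (4 : ZMod p) * hw
    · intro z hz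
      ext <;> · simp only; field_simp; ring
    · intro w hw
      ext <;> · simp only; field_simp; ring
  rw [key, hyp]
  have hcond : ((A ^ 2 - 1) * s ^ 2 = 0) ↔ (A ^ 2 = 1) := by
    rw [mul_eq_zero, sub_eq_zero, pow_eq_zero_iff (by norm_num : 2 ≠ 0), or_iff_left hs]
  rw [if_congr hcond rfl rfl]

lemma conic_good (p : ℕ) [Fact p.Prime] (s A : ZMod p) (hs : s ≠ 0) (hA : A ≠ 0)
    (h2 : (2 : ZMod p) ≠ 0) :
    ((Finset.univ.filter fun z : ZMod p × ZMod p =>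
        (z.1 * (s - z.1) = z.2 * (A * s - z.2)) ∧
          z.1 ≠ 0 ∧ z.1 ≠ s ∧ z.2 ≠ 0 ∧ z.2 ≠ A * s).card : ℤ)
      = (if A ^ 2 = 1 then 2 * (p : ℤ) - 1 else (p : ℤ) - 1) - 4 := by
  classical
  set P : ZMod p × ZMod p → Prop := fun z => z.1 * (s - z.1) = z.2 * (A * s - z.2) with hP
  set good : ZMod p × ZMod p → Prop :=
    fun z => z.1 ≠ 0 ∧ z.1 ≠ s ∧ z.2 ≠ 0 ∧ z.2 ≠ A * s with hgood
  have hsplit := Finset.card_filter_add_card_filter_not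
    (s := Finset.univ.filter P) good
  rw [Finset.filter_filter, Finset.filter_filter] at hsplit
  have hAs : A * s ≠ 0 := mul_ne_zero hA hs
  have hbad : (Finset.univ.filter fun z : ZMod p × ZMod p => P z ∧ ¬ good z)
      = ({0, s} : Finset (ZMod p)) ×ˢ ({0, A * s} : Finset (ZMod p)) := by
    ext z
    simp only [mem_filter, mem_univ, true_and, Finset.mem_product, Finset.mem_insert,
      Finset.mem_singleton, hP, hgood]
    constructor
    · rintro ⟨hpz, hng⟩
      push_neg at hng
      by_cases h1 : z.1 = 0 ∨ z.1 = s
      · have hz1 : z.1 * (s - z.1) = 0 := by rcases h1 with h | h <;> rw [h] <;> ring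
        rw [hz1] at hpz
        rcases mul_eq_zero.mp hpz.symm with h | h
        · exact ⟨h1, Or.inl h⟩
        · exact ⟨h1, Or.inr (by linear_combination -h)⟩
      · push_neg at h1
        have hd : z.2 = 0 ∨ z.2 = A * s := by
          by_cases hz2 : z.2 = 0
          · exact Or.inl hz2
          · exact Or.inr (hng h1.1 h1.2 hz2)
        rcases hd with h | h
        · have hz2 : z.2 * (A * s - z.2) = 0 := by rw [h]; ring
          rw [hz2] at hpz
          rcases mul_eq_zero.mp hpz with h' | h'
          · exact absurd h' h1.1
          · exact absurd (by linear_combination -h' : z.1 = s) h1.2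
        · have hz2 : z.2 * (A * s - z.2) = 0 := by rw [h]; ring
          rw [hz2] at hpz
          rcases mul_eq_zero.mp hpz with h' | h'
          · exact absurd h' h1.1
          · exact absurd (by linear_combination -h' : z.1 = s) h1.2
    · rintro ⟨h1, h2'⟩
      constructor
      · have e1 : z.1 * (s - z.1) = 0 := by rcases h1 with h | h <;> rw [h] <;> ring
        have e2 : z.2 * (A * s - z.2) = 0 := by rcases h2' with h | h <;> rw [h] <;> ring
        rw [e1, e2]
      · rintro ⟨g1, g2, g3, g4⟩
        rcases h1 with h | h
        exacts [g1 h, g2 h]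
  have hbadcard : (Finset.univ.filter fun z : ZMod p × ZMod p => P z ∧ ¬ good z).card = 4 := by
    rw [hbad, Finset.card_product]
    rw [Finset.card_insert_of_notMem (by simp [Ne.symm hs]),
      Finset.card_insert_of_notMem (by simp [Ne.symm hAs])]
    rfl
  have hall := conic p s A hs h2
  rw [hbadcard] at hsplit
  have hfin : (Finset.univ.filter fun z : ZMod p × ZMod p => P z ∧ good z).card + 4
      = if A ^ 2 = 1 then 2 * p - 1 else p - 1 := by rw [hsplit, hall]
  have hgoal : (Finset.univ.filter fun z : ZMod p × ZMod p =>
        (z.1 * (s - z.1) = z.2 * (A * s - z.2)) ∧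
          z.1 ≠ 0 ∧ z.1 ≠ s ∧ z.2 ≠ 0 ∧ z.2 ≠ A * s)
      = Finset.univ.filter fun z : ZMod p × ZMod p => P z ∧ good z := by
    ext z; simp [hP, hgood]
  rw [hgoal]
  have hp1 : 1 ≤ p := (Fact.out : p.Prime).one_lt.le.trans' (by norm_num)
  split_ifs at hfin ⊢ with h
  · have : 1 ≤ 2 * p := by omega
    omega
  · omega

/-- the count `ν(a)` of quadruples `(d₁, d₂, d₃, d₄)` of reduced residues mod an
odd prime `p` with `a(d₁ + d₂) ≡ d₃ + d₄` and `a(d₁⁻¹ + d₂⁻¹) ≡ d₃⁻¹ + d₄⁻¹ (mod p)` equals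
`2(p−1)(p−3) + p(p−1)` if `a² ≡ 1 (mod p)` and `2(p−1)(p−3)` otherwise. -/
theorem nu_count (p : ℕ) [Fact p.Prime] (hodd : Odd p) (a : ℤ) (ha : ¬ (p : ℤ) ∣ a) :
    (((Finset.univ.filter (fun d : (ZMod p)ˣ × (ZMod p)ˣ × (ZMod p)ˣ × (ZMod p)ˣ =>
          (a : ZMod p) * ((d.1 : ZMod p) + (d.2.1 : ZMod p)) =
              (d.2.2.1 : ZMod p) + (d.2.2.2 : ZMod p) ∧
            (a : ZMod p) * ((d.1 : ZMod p)⁻¹ + (d.2.1 : ZMod p)⁻¹) =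
              (d.2.2.1 : ZMod p)⁻¹ + (d.2.2.2 : ZMod p)⁻¹)).card : ℤ) =
        if (p : ℤ) ∣ (a ^ 2 - 1) then 2 * ((p : ℤ) - 1) * ((p : ℤ) - 3) + (p : ℤ) * ((p : ℤ) - 1)
        else 2 * ((p : ℤ) - 1) * ((p : ℤ) - 3)) := by
  classical
  have hp : p.Prime := Fact.out
  have hp1 : 1 ≤ p := hp.one_lt.le.trans' (by norm_num)
  set A : ZMod p := (a : ZMod p) with hAdef
  have hA : A ≠ 0 := by
    rw [hAdef, Ne, ZMod.intCast_zmod_eq_zero_iff_dvd]; exact ha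
  have h2 : (2 : ZMod p) ≠ 0 := by
    intro h
    have hd2 : (p : ℤ) ∣ 2 := (ZMod.intCast_zmod_eq_zero_iff_dvd 2 p).mp (by exact_mod_cast h)
    have hple : p ∣ 2 := by exact_mod_cast hd2
    have hpe : p = 2 := (Nat.prime_dvd_prime_iff_eq hp Nat.prime_two).mp hple
    rw [hpe] at hodd
    exact (by decide : ¬ Odd 2) hodd
  set Pq : (ZMod p)ˣ × (ZMod p)ˣ × (ZMod p)ˣ × (ZMod p)ˣ → Prop := fun d =>
      A * ((d.1 : ZMod p) + (d.2.1 : ZMod p)) = (d.2.2.1 : ZMod p) + (d.2.2.2 : ZMod p) ∧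
        A * ((d.1 : ZMod p)⁻¹ + (d.2.1 : ZMod p)⁻¹) =
          (d.2.2.1 : ZMod p)⁻¹ + (d.2.2.2 : ZMod p)⁻¹ with hPq
  have hsplit := Finset.card_filter_add_card_filter_not
    (s := Finset.univ.filter Pq) (fun d => (d.1 : ZMod p) + (d.2.1 : ZMod p) = 0)
  rw [Finset.filter_filter, Finset.filter_filter] at hsplit
  -- Part A : s = 0
  have hA1 : (Finset.univ.filter fun d : (ZMod p)ˣ × (ZMod p)ˣ × (ZMod p)ˣ × (ZMod p)ˣ =>
        Pq d ∧ (d.1 : ZMod p) + (d.2.1 : ZMod p) = 0)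
      = Finset.univ.filter fun d : (ZMod p)ˣ × (ZMod p)ˣ × (ZMod p)ˣ × (ZMod p)ˣ =>
        (d.1 : ZMod p) + (d.2.1 : ZMod p) = 0 ∧ (d.2.2.1 : ZMod p) + (d.2.2.2 : ZMod p) = 0 := by
    ext d
    simp only [mem_filter, mem_univ, true_and, hPq]
    constructor
    · rintro ⟨⟨c1, _⟩, hsum⟩
      refine ⟨hsum, ?_⟩
      rw [hsum, mul_zero] at c1; exact c1.symm
    · rintro ⟨h1, h2'⟩
      have hy : (d.2.1 : ZMod p) = -(d.1 : ZMod p) := by linear_combination h1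
      have hw : (d.2.2.2 : ZMod p) = -(d.2.2.1 : ZMod p) := by linear_combination h2'
      refine ⟨⟨by rw [h1, mul_zero, h2'], ?_⟩, h1⟩
      rw [hy, hw, inv_neg, inv_neg]
      ring
  have hA2 : (Finset.univ.filter fun d : (ZMod p)ˣ × (ZMod p)ˣ × (ZMod p)ˣ × (ZMod p)ˣ =>
        (d.1 : ZMod p) + (d.2.1 : ZMod p) = 0 ∧ (d.2.2.1 : ZMod p) + (d.2.2.2 : ZMod p) = 0).card
      = (p - 1) * (p - 1) := by
    have hcb : (Finset.univ.filter fun d : (ZMod p)ˣ × (ZMod p)ˣ × (ZMod p)ˣ × (ZMod p)ˣ =>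
        (d.1 : ZMod p) + (d.2.1 : ZMod p) = 0 ∧ (d.2.2.1 : ZMod p) + (d.2.2.2 : ZMod p) = 0).card
        = (Finset.univ : Finset ((ZMod p)ˣ × (ZMod p)ˣ)).card := by
      refine Finset.card_bij' (fun d _ => (d.1, d.2.2.1)) (fun e _ => (e.1, -e.1, e.2, -e.2))
        ?_ ?_ ?_ ?_
      · intro d hd; exact Finset.mem_univ _
      · intro e he
        simp only [mem_filter, mem_univ, true_and, Units.val_neg]
        constructor <;> ring
      · rintro ⟨d1, d2, d3, d4⟩ hd
        simp only [mem_filter, mem_univ, true_and] at hd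
        have h1 : -d1 = d2 := Units.ext (by rw [Units.val_neg]; linear_combination -hd.1)
        have h2 : -d3 = d4 := Units.ext (by rw [Units.val_neg]; linear_combination -hd.2)
        simp [h1, h2]
      · intro e he; rfl
    rw [hcb, Finset.card_univ, Fintype.card_prod, ZMod.card_units p]
  -- Part B : s ≠ 0
  have hB1 : (Finset.univ.filter fun d : (ZMod p)ˣ × (ZMod p)ˣ × (ZMod p)ˣ × (ZMod p)ˣ =>
        Pq d ∧ ¬ (d.1 : ZMod p) + (d.2.1 : ZMod p) = 0)
      = Finset.univ.filter fun d : (ZMod p)ˣ × (ZMod p)ˣ × (ZMod p)ˣ × (ZMod p)ˣ =>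
        ((d.1 : ZMod p) + (d.2.1 : ZMod p) ≠ 0 ∧
          (d.2.2.1 : ZMod p) + (d.2.2.2 : ZMod p) = A * ((d.1 : ZMod p) + (d.2.1 : ZMod p)) ∧
          (d.1 : ZMod p) * (d.2.1 : ZMod p) = (d.2.2.1 : ZMod p) * (d.2.2.2 : ZMod p)) := by
    ext d
    obtain ⟨d1, d2, d3, d4⟩ := d
    simp only [mem_filter, mem_univ, true_and, hPq, ne_eq]
    set x : ZMod p := (d1 : ZMod p)
    set y : ZMod p := (d2 : ZMod p)
    set z : ZMod p := (d3 : ZMod p)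
    set w : ZMod p := (d4 : ZMod p)
    have hx : x ≠ 0 := Units.ne_zero d1
    have hy : y ≠ 0 := Units.ne_zero d2
    have hz : z ≠ 0 := Units.ne_zero d3
    have hw : w ≠ 0 := Units.ne_zero d4
    constructor
    · rintro ⟨⟨c1, c2⟩, hs⟩
      refine ⟨hs, c1.symm, ?_⟩
      field_simp at c2
      have hzw : z + w ≠ 0 := by rw [← c1]; exact mul_ne_zero hA hs
      have key : (z + w) * (z * w) = (z + w) * (x * y) := by
        rw [← c1]; linear_combination c2 - (x * y) * c1
      exact (mul_left_cancel₀ hzw key).symm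
    · rintro ⟨hs, hsum, hprod⟩
      refine ⟨⟨hsum.symm, ?_⟩, hs⟩
      field_simp
      linear_combination -(x * y) * hsum - (A * (x + y)) * hprod
  have hB2 : (Finset.univ.filter fun d : (ZMod p)ˣ × (ZMod p)ˣ × (ZMod p)ˣ × (ZMod p)ˣ =>
        ((d.1 : ZMod p) + (d.2.1 : ZMod p) ≠ 0 ∧
          (d.2.2.1 : ZMod p) + (d.2.2.2 : ZMod p) = A * ((d.1 : ZMod p) + (d.2.1 : ZMod p)) ∧
          (d.1 : ZMod p) * (d.2.1 : ZMod p) = (d.2.2.1 : ZMod p) * (d.2.2.2 : ZMod p))).card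
      = ((Finset.univ.filter fun s : ZMod p => s ≠ 0).sigma (fun s =>
          Finset.univ.filter fun zz : ZMod p × ZMod p =>
            (zz.1 * (s - zz.1) = zz.2 * (A * s - zz.2)) ∧
              zz.1 ≠ 0 ∧ zz.1 ≠ s ∧ zz.2 ≠ 0 ∧ zz.2 ≠ A * s)).card := by
    refine Finset.card_bij'
      (fun d _ => ⟨(d.1 : ZMod p) + (d.2.1 : ZMod p), ((d.1 : ZMod p), (d.2.2.1 : ZMod p))⟩)
      (fun b hb => by
        rw [Finset.mem_sigma, mem_filter, mem_filter] at hb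
        exact (Units.mk0 b.2.1 hb.2.2.2.1,
          Units.mk0 (b.1 - b.2.1) (sub_ne_zero.mpr (Ne.symm hb.2.2.2.2.1)),
          Units.mk0 b.2.2 hb.2.2.2.2.2.1,
          Units.mk0 (A * b.1 - b.2.2) (sub_ne_zero.mpr (Ne.symm hb.2.2.2.2.2.2))))
      ?_ ?_ ?_ ?_
    · rintro ⟨d1, d2, d3, d4⟩ hd
      simp only [mem_filter, mem_univ, true_and] at hd
      obtain ⟨hs, hsum, hprod⟩ := hd
      dsimp only
      rw [Finset.mem_sigma, mem_filter, mem_filter]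
      refine ⟨⟨Finset.mem_univ _, hs⟩, Finset.mem_univ _, ?_, Units.ne_zero _, ?_,
        Units.ne_zero _, ?_⟩
      · dsimp only
        linear_combination hprod + (d3 : ZMod p) * hsum
      · dsimp only
        intro h
        exact Units.ne_zero d2 (by linear_combination -h)
      · dsimp only
        intro h
        exact Units.ne_zero d4 (by linear_combination hsum - h)
    · intro b hb
      have hb' := hb
      rw [Finset.mem_sigma, mem_filter, mem_filter] at hb'
      obtain ⟨⟨-, hs⟩, -, heq, h1, h2', h3, h4⟩ := hb'
      rw [mem_filter]
      refine ⟨Finset.mem_univ _, ?_, ?_, ?_⟩ <;> simp only [Units.val_mk0]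
      · intro h
        exact hs (by linear_combination h)
      · ring
      · exact heq
    · rintro ⟨d1, d2, d3, d4⟩ hd
      simp only [mem_filter, mem_univ, true_and] at hd
      obtain ⟨hs, hsum, hprod⟩ := hd
      simp only [Prod.mk.injEq]
      refine ⟨Units.ext ?_, Units.ext ?_, Units.ext ?_, Units.ext ?_⟩ <;>
        rw [Units.val_mk0]
      all_goals first | ring1 | linear_combination -hsum
    · rintro ⟨s, x, y⟩ hb
      simp only [Units.val_mk0]
      rw [show x + (s - x) = s from by ring]
  -- assemble counts
  have hsumN : ((Finset.univ.filter Pq).card : ℤ)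
      = ((p : ℤ) - 1) * ((p : ℤ) - 1)
        + ((p : ℤ) - 1) * ((if A ^ 2 = 1 then 2 * (p : ℤ) - 1 else (p : ℤ) - 1) - 4) := by
    have hcardB : (((Finset.univ.filter fun s : ZMod p => s ≠ 0).sigma (fun s =>
          Finset.univ.filter fun zz : ZMod p × ZMod p =>
            (zz.1 * (s - zz.1) = zz.2 * (A * s - zz.2)) ∧
              zz.1 ≠ 0 ∧ zz.1 ≠ s ∧ zz.2 ≠ 0 ∧ zz.2 ≠ A * s)).card : ℤ)
        = ((p : ℤ) - 1) * ((if A ^ 2 = 1 then 2 * (p : ℤ) - 1 else (p : ℤ) - 1) - 4) := by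
      rw [Finset.card_sigma]
      push_cast
      rw [Finset.sum_congr rfl (fun s hs => by
        simp only [mem_filter, mem_univ, true_and] at hs
        exact conic_good p s A hs hA h2)]
      rw [Finset.sum_const, nsmul_eq_mul]
      congr 1
      rw [Finset.filter_ne', Finset.card_erase_of_mem (Finset.mem_univ _), Finset.card_univ,
        ZMod.card p]
      push_cast [Nat.cast_sub hp1]
      ring
    have hNe : ((Finset.univ.filter Pq).card : ℤ)
        = (((p - 1) * (p - 1) : ℕ) : ℤ)
          + (((Finset.univ.filter fun s : ZMod p => s ≠ 0).sigma (fun s =>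
          Finset.univ.filter fun zz : ZMod p × ZMod p =>
            (zz.1 * (s - zz.1) = zz.2 * (A * s - zz.2)) ∧
              zz.1 ≠ 0 ∧ zz.1 ≠ s ∧ zz.2 ≠ 0 ∧ zz.2 ≠ A * s)).card : ℤ) := by
      rw [← hsplit, hA1, hA2, hB1, hB2]
      push_cast
      ring
    rw [hNe, hcardB]
    push_cast [Nat.cast_sub hp1]
    ring
  rw [hsumN]
  have hAsq : ((p : ℤ) ∣ (a ^ 2 - 1)) ↔ A ^ 2 = 1 := by
    rw [← ZMod.intCast_zmod_eq_zero_iff_dvd]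
    push_cast
    rw [sub_eq_zero, hAdef]
  by_cases hsq : (p : ℤ) ∣ (a ^ 2 - 1)
  · rw [if_pos hsq, if_pos (hAsq.mp hsq)]
    ring
  · rw [if_neg hsq, if_neg (fun h => hsq (hAsq.mpr h))]
    ring
end
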